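/- arXiv:2103.10414 — 6 statements merged into one kernel-verified Lean document; each statement's English description precedes it below -/
import Mathlib

section
/- Let T be a tournament on n ≥ 2^{k−1} vertices. Then T contains a transitive subtournament on k vertices; moreover, more than a 1/2^{k²} fraction of the k-element subsets of V(T) induce transitive subtournaments. -/
/-- `T` is a tournament relation: irreflexive, with exactly one directed edge
between any two distinct vertices. -/
def IsTournament {V : Type*} (T : V → V → Prop) : Prop :=
  (∀ v, ¬ T v v) ∧ ∀ u v : V, u ≠ v → (T u v ↔ ¬ T v u)

/-- The set `S` induces a transitive subtournament of `T`. -/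
def TransOn {V : Type*} (T : V → V → Prop) (S : Finset V) : Prop :=
  ∀ a ∈ S, ∀ b ∈ S, ∀ c ∈ S, T a b → T b c → T a c

lemma tour_asymm {V : Type*} {T : V → V → Prop} (hT : IsTournament T) :
    ∀ a b, T a b → ¬ T b a := by
  intro a b hab hba
  rcases eq_or_ne a b with rfl | h
  · exact hT.1 a hab
  · exact ((hT.2 a b h).1 hab) hba

lemma exists_trans {V : Type*} [DecidableEq V] {T : V → V → Prop} (hT : IsTournament T) :
    ∀ (j : ℕ) (B : Finset V), 2 ^ j ≤ B.card →
      ∃ S ⊆ B, S.card = j + 1 ∧ TransOn T S := by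
  intro j
  induction j with
  | zero =>
    intro B hB
    obtain ⟨v, hv⟩ := Finset.card_pos.mp (lt_of_lt_of_le (by norm_num) hB)
    refine ⟨{v}, Finset.singleton_subset_iff.mpr hv, Finset.card_singleton v, ?_⟩
    intro a ha b hb c hc hab _
    rw [Finset.mem_singleton] at ha hb
    rw [ha, hb] at hab
    exact absurd hab (hT.1 _)
  | succ j ih =>
    intro B hB
    have hBpos : 0 < B.card := lt_of_lt_of_le (Nat.two_pow_pos _) hB
    obtain ⟨v, hv⟩ := Finset.card_pos.mp hBpos
    classical
    set Out := (B.erase v).filter (fun u => T v u) with hOutdef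
    set Inn := (B.erase v).filter (fun u => ¬ T v u) with hInndef
    have hsplit : Out.card + Inn.card = B.card - 1 := by
      rw [hOutdef, hInndef, Finset.card_filter_add_card_filter_not,
        Finset.card_erase_of_mem hv]
    have hcase : 2 ^ j ≤ Out.card ∨ 2 ^ j ≤ Inn.card := by
      by_contra h
      push_neg at h
      have h2 : 2 ^ (j + 1) = 2 ^ j + 2 ^ j := by ring
      omega
    rcases hcase with h | h
    · obtain ⟨S, hSsub, hScard, hStrans⟩ := ih Out h
      have hvS : v ∉ S := fun hvS =>
        (Finset.mem_erase.mp (Finset.mem_filter.mp (hSsub hvS)).1).1 rfl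
      have hout : ∀ u ∈ S, T v u := fun u hu => (Finset.mem_filter.mp (hSsub hu)).2
      refine ⟨insert v S, ?_, ?_, ?_⟩
      · intro x hx
        rcases Finset.mem_insert.mp hx with rfl | hx
        · exact hv
        · exact Finset.mem_of_mem_erase (Finset.mem_filter.mp (hSsub hx)).1
      · rw [Finset.card_insert_of_notMem hvS, hScard]
      · intro a ha b hb c hc hab hbc
        rcases Finset.mem_insert.mp ha with ha | ha
        · rcases Finset.mem_insert.mp hc with hc | hc
          · rcases Finset.mem_insert.mp hb with hb | hb
            · rw [ha, hb] at hab; exact absurd hab (hT.1 v)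
            · rw [hc] at hbc; exact absurd hbc (tour_asymm hT v b (hout b hb))
          · rw [ha]; exact hout c hc
        · rcases Finset.mem_insert.mp hb with hb | hb
          · rw [hb] at hab; exact absurd hab (tour_asymm hT v a (hout a ha))
          · rcases Finset.mem_insert.mp hc with hc | hc
            · rw [hc] at hbc; exact absurd hbc (tour_asymm hT v b (hout b hb))
            · exact hStrans a ha b hb c hc hab hbc
    · obtain ⟨S, hSsub, hScard, hStrans⟩ := ih Inn h
      have hvS : v ∉ S := fun hvS =>
        (Finset.mem_erase.mp (Finset.mem_filter.mp (hSsub hvS)).1).1 rfl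
      have hin : ∀ u ∈ S, T u v := by
        intro u hu
        have hmem := Finset.mem_filter.mp (hSsub hu)
        have hne : u ≠ v := (Finset.mem_erase.mp hmem.1).1
        exact (hT.2 u v hne).mpr hmem.2
      refine ⟨insert v S, ?_, ?_, ?_⟩
      · intro x hx
        rcases Finset.mem_insert.mp hx with rfl | hx
        · exact hv
        · exact Finset.mem_of_mem_erase (Finset.mem_filter.mp (hSsub hx)).1
      · rw [Finset.card_insert_of_notMem hvS, hScard]
      · intro a ha b hb c hc hab hbc
        rcases Finset.mem_insert.mp ha with ha | ha
        · rcases Finset.mem_insert.mp hb with hb | hb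
          · rw [ha, hb] at hab; exact absurd hab (hT.1 v)
          · rw [ha] at hab; exact absurd hab (tour_asymm hT b v (hin b hb))
        · rcases Finset.mem_insert.mp hb with hb | hb
          · rcases Finset.mem_insert.mp hc with hc | hc
            · rw [hb, hc] at hbc; exact absurd hbc (hT.1 v)
            · rw [hb] at hbc; exact absurd hbc (tour_asymm hT c v (hin c hc))
          · rcases Finset.mem_insert.mp hc with hc | hc
            · rw [hc]; exact hin a ha
            · exact hStrans a ha b hb c hc hab hbc

/-- a tournament on `n ≥ 2^{k-1}` vertices contains a transitive subtournament
on `k` vertices; moreover more than a `1/2^{k²}` fraction of its `k`-element vertex subsets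
induce transitive subtournaments. -/
theorem transitive_subtournaments {V : Type*} [Fintype V] [DecidableEq V]
    (T : V → V → Prop) (hT : IsTournament T) (k : ℕ) (hk : 1 ≤ k)
    (hn : 2 ^ (k - 1) ≤ Fintype.card V) :
    (∃ S : Finset V, S.card = k ∧ TransOn T S) ∧
    ((Fintype.card V).choose k : ℝ) / 2 ^ (k ^ 2) <
      ({S : Finset V | S.card = k ∧ TransOn T S}.ncard : ℝ) := by
  classical
  set n := Fintype.card V with hndef
  set m := 2 ^ (k - 1) with hmdef
  have hcardU : (Finset.univ : Finset V).card = n := rfl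
  -- existence
  have hexist : ∃ S : Finset V, S.card = k ∧ TransOn T S := by
    obtain ⟨S, _, hScard, hStrans⟩ := exists_trans hT (k - 1) Finset.univ (by rw [hcardU]; exact hn)
    exact ⟨S, by omega, hStrans⟩
  refine ⟨hexist, ?_⟩
  -- the finset of transitive k-sets
  set F : Finset (Finset V) := Finset.univ.filter (fun S => S.card = k ∧ TransOn T S) with hFdef
  have hset : {S : Finset V | S.card = k ∧ TransOn T S} = ↑F := by
    ext S; simp [hFdef]
  rw [hset, Set.ncard_coe_finset]
  have hkm : k ≤ m := by
    have := Nat.lt_two_pow_self (n := k - 1)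
    omega
  have hmn : m ≤ n := hn
  -- double counting
  have h1 : ∀ B ∈ (Finset.univ : Finset V).powersetCard m,
      1 ≤ (F.bipartiteAbove (fun B A => A ⊆ B) B).card := by
    intro B hB
    rw [Finset.mem_powersetCard] at hB
    obtain ⟨S, hSsub, hScard, hStrans⟩ := exists_trans hT (k - 1) B (by rw [hB.2])
    have hSk : S.card = k := by omega
    refine Finset.card_pos.mpr ⟨S, ?_⟩
    rw [Finset.mem_bipartiteAbove]
    exact ⟨Finset.mem_filter.mpr ⟨Finset.mem_univ _, hSk, hStrans⟩, hSsub⟩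
  have h2 : ∀ A ∈ F,
      (((Finset.univ : Finset V).powersetCard m).bipartiteBelow (fun B A => A ⊆ B) A).card
        ≤ (n - k).choose (m - k) := by
    intro A hA
    rw [hFdef, Finset.mem_filter] at hA
    obtain ⟨-, hAk, -⟩ := hA
    have hmaps : ∀ B ∈ ((Finset.univ : Finset V).powersetCard m).bipartiteBelow
        (fun B A => A ⊆ B) A, B \ A ∈ (Finset.univ \ A).powersetCard (m - k) := by
      intro B hB
      rw [Finset.mem_bipartiteBelow] at hB
      obtain ⟨hB1, hB2⟩ := hB
      rw [Finset.mem_powersetCard] at hB1 ⊢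
      refine ⟨Finset.sdiff_subset_sdiff hB1.1 le_rfl, ?_⟩
      rw [Finset.card_sdiff_of_subset hB2, hB1.2, hAk]
    have hle := Finset.card_le_card_of_injOn _ hmaps ?_
    · rwa [Finset.card_powersetCard, Finset.card_sdiff_of_subset (Finset.subset_univ A), hcardU, hAk] at hle
    · intro B₁ hB₁ B₂ hB₂ hBeq
      simp only [Finset.mem_coe, Finset.mem_bipartiteBelow] at hB₁ hB₂
      have e1 : B₁ = B₁ \ A ∪ A := by
        rw [Finset.sdiff_union_self_eq_union, Finset.union_eq_left.mpr hB₁.2]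
      have e2 : B₂ = B₂ \ A ∪ A := by
        rw [Finset.sdiff_union_self_eq_union, Finset.union_eq_left.mpr hB₂.2]
      rw [e1, e2]
      exact congrArg (fun X => X ∪ A) hBeq
  have hdc : n.choose m * 1 ≤ F.card * (n - k).choose (m - k) := by
    have := Finset.card_mul_le_card_mul (fun (B A : Finset V) => A ⊆ B) h1 h2
    rwa [Finset.card_powersetCard, hcardU] at this
  rw [mul_one] at hdc
  -- choose identity to conclude C(n,k) ≤ F.card * C(m,k)
  have hid : n.choose m * m.choose k = n.choose k * (n - k).choose (m - k) :=
    Nat.choose_mul hkm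
  have hpos : 0 < (n - k).choose (m - k) :=
    Nat.choose_pos (by omega)
  have hkey : n.choose k ≤ F.card * m.choose k := by
    have h1 : n.choose k * (n - k).choose (m - k) ≤
        F.card * m.choose k * (n - k).choose (m - k) := by
      rw [← hid]
      calc n.choose m * m.choose k ≤ F.card * (n - k).choose (m - k) * m.choose k :=
            Nat.mul_le_mul_right _ hdc
        _ = F.card * m.choose k * (n - k).choose (m - k) := by ring
    exact Nat.le_of_mul_le_mul_right h1 hpos
  have hFpos : 0 < F.card := by
    obtain ⟨S, hS1, hS2⟩ := hexist
    exact Finset.card_pos.mpr ⟨S, Finset.mem_filter.mpr ⟨Finset.mem_univ _, hS1, hS2⟩⟩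
  have hchoose_lt : m.choose k < 2 ^ (k ^ 2) := by
    calc m.choose k ≤ m ^ k := Nat.choose_le_pow m k
      _ = 2 ^ ((k - 1) * k) := by rw [hmdef, ← pow_mul]
      _ < 2 ^ (k ^ 2) := by
          apply Nat.pow_lt_pow_right one_lt_two
          rw [sq, Nat.sub_mul, one_mul]
          exact Nat.sub_lt (Nat.mul_pos (by omega) (by omega)) (by omega)
  have hnat : n.choose k < F.card * 2 ^ (k ^ 2) :=
    lt_of_le_of_lt hkey (mul_lt_mul_of_pos_left hchoose_lt (by exact_mod_cast hFpos))
  rw [div_lt_iff₀ (by positivity)]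
  calc ((n.choose k : ℕ) : ℝ) < ((F.card * 2 ^ (k ^ 2) : ℕ) : ℝ) := by exact_mod_cast hnat
    _ = (F.card : ℝ) * 2 ^ (k ^ 2) := by push_cast; ring
end

section
/- Let T be a δ-cut-dense tournament on n vertices with minimum semidegree δ⁰(T) ≥ n/4 − δn/16. Then every partition (X,Y) of V(T) satisfies e⃗(X,Y) ≥ (δ/16)|X||Y|. -/
/-- Out-degree of `v` in `T`. -/
def outDeg {V : Type*} [Fintype V] (T : V → V → Prop) [DecidableRel T] (v : V) : ℕ :=
  (Finset.univ.filter fun u => T v u).card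

/-- In-degree of `v` in `T`. -/
def inDeg {V : Type*} [Fintype V] (T : V → V → Prop) [DecidableRel T] (v : V) : ℕ :=
  (Finset.univ.filter fun u => T u v).card

/-- The minimum semidegree of `T` is at least `x`. -/
def MinSemidegGE {V : Type*} [Fintype V] (T : V → V → Prop) [DecidableRel T] (x : ℝ) : Prop :=
  ∀ v : V, x ≤ (outDeg T v : ℝ) ∧ x ≤ (inDeg T v : ℝ)

/-- Number of edges of `T` directed from `X` to `Y`. -/
def eDir {V : Type*} (T : V → V → Prop) [DecidableRel T] (X Y : Finset V) : ℕ :=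
  ((X ×ˢ Y).filter fun p => T p.1 p.2).card

/-- `T` is `δ`-cut-dense: every balanced partition `(X,Y)` of the vertex set satisfies
`e⃗(X,Y) ≥ δ|X||Y|`. -/
def CutDense {V : Type*} [Fintype V] [DecidableEq V] (T : V → V → Prop) [DecidableRel T]
    (δ : ℝ) : Prop :=
  ∀ X Y : Finset V, Disjoint X Y → X ∪ Y = Finset.univ →
    |(X.card : ℝ) - (Y.card : ℝ)| ≤ 1 →
    δ * X.card * Y.card ≤ (eDir T X Y : ℝ)


open Finset

set_option linter.unusedSectionVars false
section Aux
variable {V : Type*} [DecidableEq V] (T : V → V → Prop) [DecidableRel T]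

lemma eDir_eq_sum (X Y : Finset V) :
    eDir T X Y = ∑ x ∈ X, (Y.filter (T x)).card := by
  unfold eDir
  rw [Finset.card_filter, Finset.sum_product]
  exact Finset.sum_congr rfl fun x _ => (Finset.card_filter _ _).symm

lemma eDir_le (X Y : Finset V) : eDir T X Y ≤ X.card * Y.card := by
  calc eDir T X Y ≤ (X ×ˢ Y).card := Finset.card_filter_le _ _
  _ = X.card * Y.card := Finset.card_product _ _

lemma eDir_mono_right (X : Finset V) {Y' Y : Finset V} (h : Y' ⊆ Y) :
    eDir T X Y' ≤ eDir T X Y := by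
  apply Finset.card_le_card
  apply Finset.filter_subset_filter
  exact Finset.product_subset_product_right h

lemma eDir_union_left {A B : Finset V} (Y : Finset V) (h : Disjoint A B) :
    eDir T (A ∪ B) Y = eDir T A Y + eDir T B Y := by
  unfold eDir
  rw [Finset.union_product, Finset.filter_union, Finset.card_union_of_disjoint]
  apply Finset.disjoint_filter_filter
  rw [Finset.disjoint_left]
  rintro ⟨a, b⟩ ha hb
  rw [Finset.mem_product] at ha hb
  exact (Finset.disjoint_left.1 h) ha.1 hb.1

lemma eDir_union_right (X : Finset V) {A B : Finset V} (h : Disjoint A B) :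
    eDir T X (A ∪ B) = eDir T X A + eDir T X B := by
  unfold eDir
  rw [Finset.product_union, Finset.filter_union, Finset.card_union_of_disjoint]
  apply Finset.disjoint_filter_filter
  rw [Finset.disjoint_left]
  rintro ⟨a, b⟩ ha hb
  rw [Finset.mem_product] at ha hb
  exact (Finset.disjoint_left.1 h) ha.2 hb.2

lemma sum_outDeg [Fintype V] (X : Finset V) :
    eDir T X Finset.univ = ∑ v ∈ X, outDeg T v := by
  rw [eDir_eq_sum]
  rfl

lemma eDir_flip (X Y : Finset V) :
    eDir (fun a b => T b a) X Y = eDir T Y X := by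
  unfold eDir
  apply Finset.card_bij' (fun p _ => Prod.swap p) (fun p _ => Prod.swap p)
  · rintro ⟨a, b⟩ h
    simp only [Finset.mem_filter, Finset.mem_product] at h ⊢
    exact ⟨⟨h.1.2, h.1.1⟩, h.2⟩
  · rintro ⟨a, b⟩ h
    simp only [Finset.mem_filter, Finset.mem_product] at h ⊢
    exact ⟨⟨h.1.2, h.1.1⟩, h.2⟩
  · rintro ⟨a, b⟩ _; rfl
  · rintro ⟨a, b⟩ _; rfl

lemma eDir_self (hT : IsTournament T) (X : Finset V) :
    2 * eDir T X X = X.card * X.card - X.card := by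
  have hswap : ((X ×ˢ X).filter fun p => T p.2 p.1).card = eDir T X X := by
    unfold eDir
    apply Finset.card_bij' (fun p _ => Prod.swap p) (fun p _ => Prod.swap p)
    · rintro ⟨a, b⟩ h
      simp only [Finset.mem_filter, Finset.mem_product] at h ⊢
      exact ⟨⟨h.1.2, h.1.1⟩, h.2⟩
    · rintro ⟨a, b⟩ h
      simp only [Finset.mem_filter, Finset.mem_product] at h ⊢
      exact ⟨⟨h.1.2, h.1.1⟩, h.2⟩
    · rintro ⟨a, b⟩ _; rfl
    · rintro ⟨a, b⟩ _; rfl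
  have hdisj : Disjoint ((X ×ˢ X).filter fun p => T p.1 p.2)
      ((X ×ˢ X).filter fun p => T p.2 p.1) := by
    rw [Finset.disjoint_left]
    rintro ⟨a, b⟩ ha hb
    simp only [Finset.mem_filter, Finset.mem_product] at ha hb
    rcases eq_or_ne a b with rfl | hne
    · exact hT.1 a ha.2
    · exact ((hT.2 a b hne).1 ha.2) hb.2
  have hunion : ((X ×ˢ X).filter fun p => T p.1 p.2) ∪
      ((X ×ˢ X).filter fun p => T p.2 p.1) = X.offDiag := by
    ext ⟨a, b⟩
    simp only [Finset.mem_union, Finset.mem_filter, Finset.mem_product, Finset.mem_offDiag]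
    constructor
    · rintro (⟨⟨h1, h2⟩, h3⟩ | ⟨⟨h1, h2⟩, h3⟩)
      · refine ⟨h1, h2, ?_⟩
        rintro rfl; exact hT.1 a h3
      · refine ⟨h1, h2, ?_⟩
        rintro rfl; exact hT.1 a h3
    · rintro ⟨h1, h2, h3⟩
      by_cases h : T a b
      · exact Or.inl ⟨⟨h1, h2⟩, h⟩
      · exact Or.inr ⟨⟨h1, h2⟩, (hT.2 b a (Ne.symm h3)).2 h⟩
  have := Finset.card_union_of_disjoint hdisj
  rw [hunion, hswap, Finset.offDiag_card,
    show ((X ×ˢ X).filter fun p => T p.1 p.2).card = eDir T X X from rfl] at this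
  omega

end Aux
set_option maxHeartbeats 1000000 in
theorem aux_cut {V : Type*} [Fintype V] [DecidableEq V]
    (T : V → V → Prop) [DecidableRel T] (hT : IsTournament T) (δ : ℝ)
    (hcut : CutDense T δ)
    (hdeg : MinSemidegGE T ((Fintype.card V : ℝ) / 4 - δ * (Fintype.card V : ℝ) / 16))
    (X Y : Finset V) (hd : Disjoint X Y) (hu : X ∪ Y = Finset.univ)
    (hle : X.card ≤ Y.card) :
    δ / 16 * X.card * Y.card ≤ (eDir T X Y : ℝ) := by
  set n := Fintype.card V with hn
  have hsum_card : X.card + Y.card = n := by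
    rw [← Finset.card_union_of_disjoint hd, hu, Finset.card_univ]
  -- trivial case δ ≤ 0
  rcases le_or_gt δ 0 with hδ | hδ
  · have h1 : (0:ℝ) ≤ (eDir T X Y : ℝ) := Nat.cast_nonneg _
    have h2 : (0:ℝ) ≤ (X.card : ℝ) * Y.card :=
      mul_nonneg (Nat.cast_nonneg _) (Nat.cast_nonneg _)
    nlinarith
  -- trivial case n ≤ 1
  rcases le_or_gt n 1 with hn1 | hn1
  · have hx0 : X.card = 0 := by omega
    rw [hx0]
    simpa using (Nat.cast_nonneg (eDir T X Y) : (0:ℝ) ≤ _)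
  -- δ ≤ 1
  have hδ1 : δ ≤ 1 := by
    obtain ⟨A, hA, hAcard⟩ := Finset.exists_subset_card_eq (s := (Finset.univ : Finset V)) (n := n / 2)
      (by rw [Finset.card_univ]; exact Nat.div_le_self _ _)
    set B := (Finset.univ : Finset V) \ A with hB
    have hdAB : Disjoint A B := Finset.disjoint_sdiff
    have huAB : A ∪ B = Finset.univ := Finset.union_sdiff_of_subset hA
    have hBcard : B.card = n - n / 2 := by
      rw [hB, Finset.card_sdiff_of_subset hA, Finset.card_univ, hAcard]
    have hbal : |(A.card : ℝ) - (B.card : ℝ)| ≤ 1 := by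
      rw [abs_le]
      have h1 : A.card ≤ B.card := by omega
      have h2 : B.card ≤ A.card + 1 := by omega
      have h1' : (A.card : ℝ) ≤ B.card := Nat.cast_le.mpr h1
      have h2' : (B.card : ℝ) ≤ A.card + 1 := by exact_mod_cast h2
      constructor <;> linarith
    have hcd := hcut A B hdAB huAB hbal
    have hub : (eDir T A B : ℝ) ≤ (A.card : ℝ) * B.card := by
      exact_mod_cast eDir_le T A B
    have hA1 : (1:ℝ) ≤ A.card := by
      have : 1 ≤ A.card := by omega
      exact_mod_cast this
    have hB1 : (1:ℝ) ≤ B.card := by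
      have : 1 ≤ B.card := by omega
      exact_mod_cast this
    have hab : (1:ℝ) ≤ (A.card : ℝ) * B.card := by nlinarith
    nlinarith [hab, hcd, hub]
  -- degree-counting lower bound for eDir T X Y
  have hkey : (X.card : ℝ) * ((n:ℝ)/4 - δ*(n:ℝ)/16) - ((X.card:ℝ)*X.card - X.card)/2
      ≤ (eDir T X Y : ℝ) := by
    have hsplit : eDir T X X + eDir T X Y = ∑ v ∈ X, outDeg T v := by
      rw [← sum_outDeg, ← hu, eDir_union_right T X hd]
    have hself := eDir_self T hT X
    have hXle : X.card ≤ X.card * X.card := by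
      rcases Nat.eq_zero_or_pos X.card with h | h
      · simp [h]
      · exact Nat.le_mul_of_pos_left _ h
    have hself' : 2 * (eDir T X X : ℝ) = (X.card:ℝ) * X.card - X.card := by
      have := congrArg (Nat.cast (R := ℝ)) hself
      push_cast [Nat.cast_sub hXle] at this
      exact_mod_cast this
    have hdegsum : (X.card : ℝ) * ((n:ℝ)/4 - δ*(n:ℝ)/16) ≤ ∑ v ∈ X, (outDeg T v : ℝ) := by
      have := Finset.card_nsmul_le_sum X (fun v => (outDeg T v : ℝ))
        ((n:ℝ)/4 - δ*(n:ℝ)/16) (fun v _ => (hdeg v).1)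
      rwa [nsmul_eq_mul] at this
    have hsplit' : (eDir T X X : ℝ) + (eDir T X Y : ℝ) = ∑ v ∈ X, (outDeg T v : ℝ) := by
      exact_mod_cast congrArg (Nat.cast (R := ℝ)) hsplit
    linarith
  have hx0 : (0:ℝ) ≤ X.card := Nat.cast_nonneg _
  have hy0 : (0:ℝ) ≤ Y.card := Nat.cast_nonneg _
  have hxy : (X.card : ℝ) + Y.card = n := by exact_mod_cast hsum_card
  have hxley : (X.card : ℝ) ≤ Y.card := Nat.cast_le.mpr hle
  by_cases hsmall : (X.card : ℝ) ≤ (n:ℝ)/2 - δ*(n:ℝ)/4 + 1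
  · -- Case 1: X is small, degree bound suffices
    have hs : (0:ℝ) ≤ (n:ℝ)/2 - δ*(n:ℝ)/4 + 1 - X.card := by linarith
    rw [show (Y.card:ℝ) = (n:ℝ) - X.card from by linarith]
    nlinarith [mul_nonneg hx0 hs, mul_nonneg (mul_nonneg hδ.le hx0) hx0]
  · -- Case 2: nearly balanced, use cut-density after rebalancing
    push_neg at hsmall
    set t := (Y.card - X.card) / 2 with ht
    have htle : t ≤ Y.card := by omega
    obtain ⟨S, hS, hScard⟩ := Finset.exists_subset_card_eq htle
    set X' := X ∪ S with hX'
    set Y' := Y \ S with hY'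
    have hdXS : Disjoint X S := hd.mono_right hS
    have hd' : Disjoint X' Y' := by
      rw [hX', Finset.disjoint_union_left]
      exact ⟨hd.mono_right (Finset.sdiff_subset), Finset.sdiff_disjoint.symm⟩
    have hu' : X' ∪ Y' = Finset.univ := by
      rw [hX', hY', Finset.union_assoc, Finset.union_sdiff_of_subset hS, hu]
    have hX'card : X'.card = X.card + t := by
      rw [hX', Finset.card_union_of_disjoint hdXS, hScard]
    have hY'card : Y'.card = Y.card - t := by
      rw [hY', Finset.card_sdiff_of_subset hS, hScard]
    have hbal : |(X'.card : ℝ) - (Y'.card : ℝ)| ≤ 1 := by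
      rw [abs_le]
      have h1 : X'.card ≤ Y'.card := by omega
      have h2 : Y'.card ≤ X'.card + 1 := by omega
      have h1' : (X'.card : ℝ) ≤ Y'.card := Nat.cast_le.mpr h1
      have h2' : (Y'.card : ℝ) ≤ X'.card + 1 := by exact_mod_cast h2
      constructor <;> linarith
    have hcd := hcut X' Y' hd' hu' hbal
    have hsplit : eDir T X' Y' = eDir T X Y' + eDir T S Y' := eDir_union_left T Y' hdXS
    have hmono : eDir T X Y' ≤ eDir T X Y := eDir_mono_right T X Finset.sdiff_subset
    have hSb : eDir T S Y' ≤ t * Y'.card := by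
      have := eDir_le T S Y'
      rwa [hScard] at this
    -- real versions
    have hX'r : (X'.card : ℝ) = X.card + t := by exact_mod_cast hX'card
    have hY'r : (Y'.card : ℝ) = Y.card - t := by
      rw [hY'card, Nat.cast_sub htle]
    have hEr : δ * ((X.card:ℝ) + t) * ((Y.card:ℝ) - t) - t * ((Y.card:ℝ) - t)
        ≤ (eDir T X Y : ℝ) := by
      have hsp : (eDir T X' Y' : ℝ) = eDir T X Y' + eDir T S Y' := by exact_mod_cast hsplit
      have hm : (eDir T X Y' : ℝ) ≤ eDir T X Y := Nat.cast_le.mpr hmono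
      have hb : (eDir T S Y' : ℝ) ≤ (t:ℝ) * Y'.card := by exact_mod_cast hSb
      rw [hX'r, hY'r] at hcd
      rw [hY'r] at hb
      linarith
    -- numeric finish
    set x := (X.card : ℝ)
    set y := (Y.card : ℝ)
    set tc := (t : ℝ)
    have ht0 : (0:ℝ) ≤ tc := Nat.cast_nonneg _
    have h2t : 2 * tc ≤ y - x := by
      have : 2 * t ≤ Y.card - X.card := by omega
      have := (Nat.cast_le (α := ℝ)).mpr this
      push_cast at this
      rw [Nat.cast_sub hle] at this
      linarith [this]
    have h2t' : y - x ≤ 2 * tc + 1 := by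
      have h : Y.card - X.card ≤ 2 * t + 1 := by omega
      have := (Nat.cast_le (α := ℝ)).mpr h
      rw [Nat.cast_sub hle] at this
      push_cast at this
      linarith [this]
    have hn0 : (0:ℝ) ≤ n := by positivity
    have ht1 : tc ≤ δ*(n:ℝ)/4 - 1 := by linarith
    have hxt : ((n:ℝ) - 1)/2 ≤ x + tc := by linarith
    have hyt : x + tc ≤ y - tc := by linarith
    have hn4 : 4 < (n:ℝ) := by
      nlinarith [mul_le_mul_of_nonneg_right hδ1 hn0]
    have key1 : δ*(n:ℝ)/4 ≤ δ*(x+tc) - tc := by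
      nlinarith [mul_le_mul_of_nonneg_left hxt hδ.le]
    have p1 : (0:ℝ) ≤ (y - tc) - ((n:ℝ)-1)/2 := by linarith
    have p2 : (0:ℝ) ≤ (δ*(x+tc) - tc) - δ*(n:ℝ)/4 := by linarith
    have hq0 : (0:ℝ) ≤ δ*(n:ℝ)/4 := by positivity
    have hq1 : (0:ℝ) ≤ (δ*(n:ℝ)/4) * ((y - tc) - ((n:ℝ)-1)/2) := mul_nonneg hq0 p1
    have hq2 : (0:ℝ) ≤ (((n:ℝ)-1)/2) * ((δ*(x+tc) - tc) - δ*(n:ℝ)/4) :=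
      mul_nonneg (by linarith) p2
    have keyprod : ((n:ℝ)-1)/2 * (δ*(n:ℝ)/4) ≤ (y - tc) * (δ*(x+tc) - tc) := by
      nlinarith [mul_nonneg p1 p2, hq1, hq2]
    have hxyn : x * y ≤ (n:ℝ)^2/4 := by nlinarith [sq_nonneg (x - y)]
    have hA : δ/16 * (x*y) ≤ δ/16 * ((n:ℝ)^2/4) :=
      mul_le_mul_of_nonneg_left hxyn (by positivity)
    have hB : δ/16 * ((n:ℝ)^2/4) ≤ ((n:ℝ)-1)/2 * (δ*(n:ℝ)/4) := by
      nlinarith [mul_nonneg hδ.le (by nlinarith : (0:ℝ) ≤ 7*(n:ℝ)^2 - 8*n)]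
    nlinarith [hA, hB, keyprod, hEr]

/-- if `T` is a `δ`-cut-dense tournament on `n` vertices with minimum semidegree
at least `n/4 − δn/16`, then every partition `(X,Y)` of the vertex set satisfies
`e⃗(X,Y) ≥ (δ/16)|X||Y|`. -/
theorem any_cut_is_dense {V : Type*} [Fintype V] [DecidableEq V]
    (T : V → V → Prop) [DecidableRel T] (hT : IsTournament T) (δ : ℝ)
    (hcut : CutDense T δ)
    (hdeg : MinSemidegGE T ((Fintype.card V : ℝ) / 4 - δ * (Fintype.card V : ℝ) / 16)) :
    ∀ X Y : Finset V, Disjoint X Y → X ∪ Y = Finset.univ →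
      δ / 16 * X.card * Y.card ≤ (eDir T X Y : ℝ) := by
  intro X Y hd hu
  rcases le_total X.card Y.card with h | h
  · exact aux_cut T hT δ hcut hdeg X Y hd hu h
  · letI instF : DecidableRel (fun a b : V => T b a) := fun a b => ‹DecidableRel T› b a
    have hT' : IsTournament (fun a b => T b a) := by
      constructor
      · exact hT.1
      · intro u v huv
        exact (hT.2 v u (Ne.symm huv))
    have hcut' : CutDense (fun a b => T b a) δ := by
      intro A B hdAB huAB hbal
      rw [eDir_flip]
      have := hcut B A hdAB.symm (by rw [Finset.union_comm]; exact huAB)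
        (by rw [abs_sub_comm]; exact hbal)
      calc δ * A.card * B.card = δ * B.card * A.card := by ring
      _ ≤ _ := this
    have hdeg' : MinSemidegGE (fun a b => T b a)
        ((Fintype.card V : ℝ) / 4 - δ * (Fintype.card V : ℝ) / 16) := by
      intro v
      exact ⟨(hdeg v).2, (hdeg v).1⟩
    have h2 := aux_cut (fun a b => T b a) hT' δ hcut' hdeg' Y X hd.symm
      (by rw [Finset.union_comm]; exact hu) h
    rw [eDir_flip] at h2
    calc δ / 16 * X.card * Y.card = δ / 16 * Y.card * X.card := by ring
    _ ≤ _ := h2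
end

section
/- Let α ∈ (0,1) and let t, k, N be positive integers with t ≥ k/α. Let S₁, …, S_t be subsets of an N-element set, each of size at least αN. Then there exist k distinct indices i₁ < … < i_k such that |S_{i₁} ∩ … ∩ S_{i_k}| ≥ (α/e)^k · N. -/
open Finset

/-- Cast of descending factorial as a real product. -/
lemma cast_descFactorial_eq (n k : ℕ) (h : k ≤ n) :
    ((n.descFactorial k : ℝ)) = ∏ j ∈ range k, ((n : ℝ) - j) := by
  rw [Nat.descFactorial_eq_prod_range, Nat.cast_prod]
  refine Finset.prod_congr rfl fun j hj => ?_
  rw [Finset.mem_range] at hj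
  rw [Nat.cast_sub (le_trans hj.le h)]

/-- The truncated falling-factorial function is monotone, nonneg, convex on `[k-1, ∞)`. -/
lemma fall_props (k m : ℕ) (hm : ∀ j, j < m → (j : ℝ) ≤ (k : ℝ) - 1) :
    MonotoneOn (fun y : ℝ => ∏ j ∈ range m, (y - j)) (Set.Ici ((k : ℝ) - 1)) ∧
    (∀ y ∈ Set.Ici ((k : ℝ) - 1), 0 ≤ ∏ j ∈ range m, (y - j)) ∧
    ConvexOn ℝ (Set.Ici ((k : ℝ) - 1)) (fun y : ℝ => ∏ j ∈ range m, (y - j)) := by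
  induction m with
  | zero =>
      simp only [range_zero, Finset.prod_empty]
      exact ⟨monotoneOn_const, fun y _ => zero_le_one, convexOn_const 1 (convex_Ici _)⟩
  | succ m ih =>
      obtain ⟨hmono, hnn, hconv⟩ := ih (fun j hj => hm j (hj.trans (Nat.lt_succ_self m)))
      have hmle : (m : ℝ) ≤ (k : ℝ) - 1 := hm m (Nat.lt_succ_self m)
      have hgmono : MonotoneOn (fun y : ℝ => y - (m : ℝ)) (Set.Ici ((k : ℝ) - 1)) :=
        fun a _ b _ hab => by simpa using sub_le_sub_right hab (m : ℝ)
      have hgnn : ∀ y ∈ Set.Ici ((k : ℝ) - 1), 0 ≤ y - (m : ℝ) := fun y hy => by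
        simp only [Set.mem_Ici] at hy; linarith
      have hgconv : ConvexOn ℝ (Set.Ici ((k : ℝ) - 1)) (fun y : ℝ => y - (m : ℝ)) := by
        exact (convexOn_id (convex_Ici ((k : ℝ) - 1))).sub
          (concaveOn_const (m : ℝ) (convex_Ici _))
      have heq : (fun y : ℝ => ∏ j ∈ range (m + 1), (y - j)) =
          (fun y : ℝ => ∏ j ∈ range m, (y - j)) * (fun y : ℝ => y - (m : ℝ)) := by
        funext y; simp [Finset.prod_range_succ]
      refine ⟨?_, ?_, ?_⟩
      · intro a ha b hb hab
        simp only [Finset.prod_range_succ]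
        exact mul_le_mul (hmono ha hb hab) (by linarith [hgmono ha hb hab])
          (hgnn a ha) (le_trans (hnn a ha) (hmono ha hb hab))
      · intro y hy
        simp only [Finset.prod_range_succ]
        exact mul_nonneg (hnn y hy) (hgnn y hy)
      · rw [heq]
        exact hconv.mul hgconv hnn hgnn (hmono.monovaryOn hgmono)

/-- Kővári–Sós–Turán-type lemma: given `t ≥ k/α` subsets of an `N`-element
set, each of size at least `αN`, some `k` of them intersect in at least `(α/e)^k·N`
elements. -/
theorem kst_intersection {β : Type*} [DecidableEq β] (α : ℝ) (hα0 : 0 < α) (hα1 : α < 1)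
    (t k : ℕ) (ht : 0 < t) (hk : 0 < k) (htk : (k : ℝ) / α ≤ (t : ℝ))
    (N : Finset β) (hN : 0 < N.card)
    (S : Fin t → Finset β) (hsub : ∀ i, S i ⊆ N)
    (hsize : ∀ i, α * (N.card : ℝ) ≤ ((S i).card : ℝ)) :
    ∃ I : Finset (Fin t), I.card = k ∧
      (α / Real.exp 1) ^ k * (N.card : ℝ) ≤
        ((N.filter fun x => ∀ i ∈ I, x ∈ S i).card : ℝ) := by
  classical
  set n := N.card with hn
  have hαt : (k : ℝ) ≤ α * t := by
    rw [div_le_iff₀ hα0] at htk; linarith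
  have hkt : k ≤ t := by
    have : (k : ℝ) ≤ (t : ℝ) :=
      le_trans (le_div_self (Nat.cast_nonneg k) hα0 hα1.le) htk
    exact_mod_cast this
  set P := (Finset.univ : Finset (Fin t)).powersetCard k with hP
  have hPcard : P.card = t.choose k := by
    rw [hP, card_powersetCard, card_univ, Fintype.card_fin]
  have hPne : P.Nonempty := card_pos.mp (by rw [hPcard]; exact Nat.choose_pos hkt)
  set D : β → Finset (Fin t) := fun x => Finset.univ.filter (fun i => x ∈ S i) with hD
  -- double counting
  have hdc : ∑ I ∈ P, (N.filter fun x => ∀ i ∈ I, x ∈ S i).card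
      = ∑ x ∈ N, ((D x).card).choose k := by
    calc ∑ I ∈ P, (N.filter fun x => ∀ i ∈ I, x ∈ S i).card
        = ∑ I ∈ P, ∑ x ∈ N, if (∀ i ∈ I, x ∈ S i) then 1 else 0 :=
          Finset.sum_congr rfl fun I _ => Finset.card_filter _ N
      _ = ∑ x ∈ N, ∑ I ∈ P, if (∀ i ∈ I, x ∈ S i) then 1 else 0 := Finset.sum_comm
      _ = ∑ x ∈ N, ((D x).card).choose k := by
          refine Finset.sum_congr rfl fun x _ => ?_
          rw [← Finset.card_filter]
          have h2 : (P.filter fun I => ∀ i ∈ I, x ∈ S i) = (D x).powersetCard k := by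
            ext I
            simp only [hP, hD, Finset.mem_filter, Finset.mem_powersetCard,
              Finset.subset_iff, Finset.mem_univ, true_and]
            tauto
          rw [h2, Finset.card_powersetCard]
  -- degree sum
  have hdeg : ∑ x ∈ N, ((D x).card : ℝ) = ∑ i : Fin t, ((S i).card : ℝ) := by
    have hnat : ∑ x ∈ N, (D x).card = ∑ i : Fin t, (S i).card := by
      simp_rw [hD, Finset.card_filter]
      rw [Finset.sum_comm]
      refine Finset.sum_congr rfl fun i _ => ?_
      rw [← Finset.card_filter]
      congr 1
      ext x
      simp only [Finset.mem_filter]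
      exact ⟨fun h => h.2, fun h => ⟨hsub i h, h⟩⟩
    exact_mod_cast congrArg (Nat.cast : ℕ → ℝ) hnat
  have hdegsum : α * t * n ≤ ∑ x ∈ N, ((D x).card : ℝ) := by
    rw [hdeg]
    calc α * t * n = ∑ _i : Fin t, α * n := by
          rw [Finset.sum_const, card_univ, Fintype.card_fin]; ring
      _ ≤ ∑ i : Fin t, ((S i).card : ℝ) := Finset.sum_le_sum fun i _ => hsize i
  -- convexity setup
  set c : ℝ := (k : ℝ) - 1 with hc
  set f : ℝ → ℝ := fun y => ∏ j ∈ range k, (y - j) with hf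
  obtain ⟨hmono, hnn, hconv⟩ := fall_props k k (fun j hj => by
    have h1 : j + 1 ≤ k := hj
    have h2 : ((j : ℝ)) + 1 ≤ (k : ℝ) := by exact_mod_cast h1
    linarith)
  set e : β → ℝ := fun x => max ((D x).card : ℝ) c with he
  have hemem : ∀ x, e x ∈ Set.Ici c := fun x => Set.mem_Ici.mpr (le_max_right _ _)
  have hcast_c : ((k - 1 : ℕ) : ℝ) = c := by
    rw [hc, Nat.cast_sub (by omega : 1 ≤ k)]; norm_num
  -- pointwise bound
  have hpt : ∀ x, f (e x) ≤ (((D x).card).descFactorial k : ℝ) := by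
    intro x
    have hex : e x = max ((D x).card : ℝ) c := rfl
    rcases le_or_gt c ((D x).card : ℝ) with h | h
    · rw [hex, max_eq_left h]
      rcases Nat.lt_or_ge ((D x).card) k with hlt | hge
      · have hkd' : k - 1 ≤ (D x).card := by
          have : (k : ℝ) - 1 ≤ ((D x).card : ℝ) := h
          have : ((k - 1 : ℕ) : ℝ) ≤ ((D x).card : ℝ) := by rw [hcast_c]; exact this
          exact_mod_cast this
        have hdk : (D x).card = k - 1 := by omega
        have hf0 : f (((D x).card : ℕ) : ℝ) = 0 := by
          show (∏ j ∈ range k, (((D x).card : ℝ) - j)) = 0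
          refine Finset.prod_eq_zero (i := k - 1)
            (Finset.mem_range.mpr (Nat.sub_lt hk one_pos)) ?_
          rw [hdk]; exact sub_self _
        rw [hf0]; exact Nat.cast_nonneg _
      · exact le_of_eq (cast_descFactorial_eq ((D x).card) k hge).symm
    · rw [hex, max_eq_right h.le]
      have hf0 : f c = 0 := by
        show (∏ j ∈ range k, (c - (j : ℝ))) = 0
        refine Finset.prod_eq_zero (i := k - 1)
          (Finset.mem_range.mpr (Nat.sub_lt hk one_pos)) ?_
        rw [hcast_c]; exact sub_self _
      rw [hf0]; exact Nat.cast_nonneg _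
  -- Jensen
  have hnpos : (0 : ℝ) < n := Nat.cast_pos.mpr hN
  have havg : α * t ≤ (∑ x ∈ N, e x) / n := by
    rw [le_div_iff₀ hnpos]
    calc α * t * n ≤ ∑ x ∈ N, ((D x).card : ℝ) := hdegsum
      _ ≤ ∑ x ∈ N, e x := Finset.sum_le_sum fun x _ => le_max_left _ _
  have hαtmem : α * t ∈ Set.Ici c := Set.mem_Ici.mpr (by rw [hc]; linarith)
  have havgmem : (∑ x ∈ N, e x) / n ∈ Set.Ici c :=
    Set.mem_Ici.mpr (le_trans (Set.mem_Ici.mp hαtmem) havg)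
  have hJ : (n : ℝ) * f ((∑ x ∈ N, e x) / n) ≤ ∑ x ∈ N, f (e x) := by
    have hw1 : ∑ _x ∈ N, (n : ℝ)⁻¹ = 1 := by
      rw [Finset.sum_const, nsmul_eq_mul, ← hn]
      field_simp
    have hjen := hconv.map_sum_le (t := N) (w := fun _ => (n : ℝ)⁻¹) (p := e)
      (fun _ _ => inv_nonneg.mpr hnpos.le) hw1 (fun x _ => hemem x)
    simp only [smul_eq_mul] at hjen
    rw [← Finset.mul_sum, ← Finset.mul_sum] at hjen
    have h2 : (n : ℝ)⁻¹ * ∑ x ∈ N, e x = (∑ x ∈ N, e x) / n := by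
      rw [inv_mul_eq_div]
    rw [h2] at hjen
    calc (n : ℝ) * f ((∑ x ∈ N, e x) / n)
        ≤ (n : ℝ) * ((n : ℝ)⁻¹ * ∑ x ∈ N, f (e x)) :=
          mul_le_mul_of_nonneg_left hjen hnpos.le
      _ = ∑ x ∈ N, f (e x) := by field_simp
  -- lower bound on f (α t)
  have hkpos : (0 : ℝ) < (k : ℝ) := Nat.cast_pos.mpr hk
  have hratio : (1 : ℝ) ≤ α * t / k := by
    rw [le_div_iff₀ hkpos]; linarith
  have hflb : (α * t / k) ^ k * (k.factorial : ℝ) ≤ f (α * t) := by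
    have hfact : (k.factorial : ℝ) = ∏ j ∈ range k, ((k : ℝ) - j) := by
      rw [← Nat.descFactorial_self k]; exact cast_descFactorial_eq k k le_rfl
    have hprod : ∏ j ∈ range k, ((α * t / k) * ((k : ℝ) - j))
        ≤ ∏ j ∈ range k, (α * t - j) := by
      refine Finset.prod_le_prod (fun j hj => ?_) (fun j hj => ?_)
      · rw [Finset.mem_range] at hj
        have hjk : (j : ℝ) ≤ (k : ℝ) := by exact_mod_cast hj.le
        nlinarith
      · rw [Finset.mem_range] at hj
        have hjk : (j : ℝ) ≤ (k : ℝ) := by exact_mod_cast hj.le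
        have hj0 : (0 : ℝ) ≤ (j : ℝ) := Nat.cast_nonneg j
        have h4 : (1 : ℝ) * j ≤ (α * t / k) * j :=
          mul_le_mul_of_nonneg_right hratio hj0
        have h5 : α * t / k * ((k : ℝ) - j) = α * t - α * t / k * j := by
          field_simp
        rw [h5]; linarith
    calc (α * t / k) ^ k * (k.factorial : ℝ)
        = ∏ j ∈ range k, ((α * t / k) * ((k : ℝ) - j)) := by
          rw [Finset.prod_mul_distrib, Finset.prod_const, card_range, hfact]
      _ ≤ ∏ j ∈ range k, (α * t - j) := hprod
      _ = f (α * t) := rfl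
  -- combine into sum lower bound
  have hfacpos : (0 : ℝ) < (k.factorial : ℝ) := by exact_mod_cast k.factorial_pos
  have hsum : (n : ℝ) * (α * t / k) ^ k
      ≤ ∑ I ∈ P, ((N.filter fun x => ∀ i ∈ I, x ∈ S i).card : ℝ) := by
    rw [← mul_le_mul_iff_left₀ hfacpos]
    have hcast : ∑ I ∈ P, ((N.filter fun x => ∀ i ∈ I, x ∈ S i).card : ℝ)
        = ∑ x ∈ N, (((D x).card).choose k : ℝ) := by
      exact_mod_cast congrArg (Nat.cast : ℕ → ℝ) hdc
    calc (n : ℝ) * (α * t / k) ^ k * (k.factorial : ℝ)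
        = (n : ℝ) * ((α * t / k) ^ k * (k.factorial : ℝ)) := by ring
      _ ≤ (n : ℝ) * f (α * t) := mul_le_mul_of_nonneg_left hflb hnpos.le
      _ ≤ (n : ℝ) * f ((∑ x ∈ N, e x) / n) :=
          mul_le_mul_of_nonneg_left (hmono hαtmem havgmem havg) hnpos.le
      _ ≤ ∑ x ∈ N, f (e x) := hJ
      _ ≤ ∑ x ∈ N, (((D x).card).descFactorial k : ℝ) :=
          Finset.sum_le_sum fun x _ => hpt x
      _ = ∑ x ∈ N, (k.factorial : ℝ) * (((D x).card).choose k : ℝ) := by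
          refine Finset.sum_congr rfl fun x _ => ?_
          exact_mod_cast congrArg (Nat.cast : ℕ → ℝ)
            (Nat.descFactorial_eq_factorial_mul_choose _ _)
      _ = (∑ I ∈ P, ((N.filter fun x => ∀ i ∈ I, x ∈ S i).card : ℝ)) * (k.factorial : ℝ) := by
          rw [hcast, Finset.sum_mul]
          exact Finset.sum_congr rfl fun x _ => by ring
  -- scalar inequality
  have hepos : (0 : ℝ) < Real.exp 1 := Real.exp_pos 1
  have hCle : (t.choose k : ℝ) * (k.factorial : ℝ) ≤ (t : ℝ) ^ k := by
    have h1 : k.factorial * t.choose k ≤ t ^ k := by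
      rw [← Nat.descFactorial_eq_factorial_mul_choose]
      exact Nat.descFactorial_le_pow t k
    calc (t.choose k : ℝ) * (k.factorial : ℝ)
        = ((k.factorial * t.choose k : ℕ) : ℝ) := by push_cast; ring
      _ ≤ ((t ^ k : ℕ) : ℝ) := by exact_mod_cast h1
      _ = (t : ℝ) ^ k := by push_cast; ring
  have hkk : (k : ℝ) ^ k ≤ Real.exp 1 ^ k * (k.factorial : ℝ) := by
    have h1 : ((k : ℝ)) ^ k / (k.factorial : ℝ) ≤ Real.exp (k : ℝ) :=
      Real.pow_div_factorial_le_exp (x := (k : ℝ)) (Nat.cast_nonneg k) k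
    have h2 : Real.exp (k : ℝ) = Real.exp 1 ^ k := by
      rw [← Real.exp_nat_mul, mul_one]
    rw [div_le_iff₀ hfacpos, h2] at h1
    linarith
  have hscalar : (α / Real.exp 1) ^ k * (t.choose k : ℝ) ≤ (α * t / k) ^ k := by
    have htpos : (0 : ℝ) < (t : ℝ) := Nat.cast_pos.mpr ht
    have h1 : (α / Real.exp 1) ^ k * (t.choose k : ℝ)
        ≤ (α / Real.exp 1) ^ k * ((t : ℝ) ^ k / (k.factorial : ℝ)) := by
      refine mul_le_mul_of_nonneg_left ?_ (by positivity)
      rw [le_div_iff₀ hfacpos]; exact hCle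
    have h2 : (α / Real.exp 1) ^ k * ((t : ℝ) ^ k / (k.factorial : ℝ))
        ≤ (α * t / k) ^ k := by
      rw [div_pow, div_pow, mul_pow, div_mul_div_comm,
        div_le_div_iff₀ (by positivity) (by positivity)]
      have h3 : (0 : ℝ) ≤ α ^ k * (t : ℝ) ^ k := by positivity
      nlinarith [mul_le_mul_of_nonneg_left hkk h3]
    linarith
  -- extract some I
  have hfinal : ∑ _I ∈ P, ((α / Real.exp 1) ^ k * (n : ℝ))
      ≤ ∑ I ∈ P, ((N.filter fun x => ∀ i ∈ I, x ∈ S i).card : ℝ) := by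
    rw [Finset.sum_const, hPcard, nsmul_eq_mul]
    calc (t.choose k : ℝ) * ((α / Real.exp 1) ^ k * (n : ℝ))
        = (n : ℝ) * ((α / Real.exp 1) ^ k * (t.choose k : ℝ)) := by ring
      _ ≤ (n : ℝ) * (α * t / k) ^ k := mul_le_mul_of_nonneg_left hscalar hnpos.le
      _ ≤ _ := hsum
  obtain ⟨I, hIP, hIle⟩ := Finset.exists_le_of_sum_le hPne hfinal
  rw [hP, Finset.mem_powersetCard] at hIP
  exact ⟨I, hIP.2, hIle⟩
end

section
/- Let T be a tournament and A, S ⊆ V(T) with |S| ≥ 2^{30k}. Suppose every vertex v ∈ S satisfies d⁺_A(v) ≥ |A|/20. Then S contains an A-head of size k; moreover, more than a 1/2^{30k²} fraction of the k-element subsets of S are A-heads. Analogously, if every v ∈ S satisfies d⁻_A(v) ≥ |A|/20, then S contains an A-tail of size k and more than a 1/2^{30k²} fraction of the k-element subsets of S are A-tails. -/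
set_option linter.unusedSectionVars false
set_option linter.unusedVariables false
set_option maxHeartbeats 1000000


/-- `S` is an `A`-head of size `k`: `S` has `k` elements, induces a transitive
subtournament, and its common out-neighbourhood inside `A` has size at least `|A|/2^{6k}`. -/
def IsHead {V : Type*} (T : V → V → Prop) (A : Finset V) (k : ℕ) (S : Finset V) : Prop :=
  S.card = k ∧ TransOn T S ∧
    (A.card : ℝ) / 2 ^ (6 * k) ≤ ({a : V | a ∈ A ∧ ∀ s ∈ S, T s a}.ncard : ℝ)

/-- `S` is an `A`-tail of size `k`: `S` has `k` elements, induces a transitive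
subtournament, and its common in-neighbourhood inside `A` has size at least `|A|/2^{6k}`. -/
def IsTail {V : Type*} (T : V → V → Prop) (A : Finset V) (k : ℕ) (S : Finset V) : Prop :=
  S.card = k ∧ TransOn T S ∧
    (A.card : ℝ) / 2 ^ (6 * k) ≤ ({a : V | a ∈ A ∧ ∀ s ∈ S, T a s}.ncard : ℝ)


namespace HeadTail
open Finset
open scoped Classical
variable {V : Type*} [DecidableEq V] {T : V → V → Prop}


lemma tourn_asymm (hT : IsTournament T) {u v : V} (h : T u v) : ¬ T v u := by
  intro h2
  by_cases he : u = v
  · exact hT.1 u (he ▸ h)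
  · exact ((hT.2 u v he).mp h) h2

lemma tourn_total (hT : IsTournament T) {u v : V} (hne : u ≠ v) (h : ¬ T u v) : T v u :=
  (hT.2 v u hne.symm).mpr h

lemma transOn_subset {K J : Finset V} (h : TransOn T K) (hJK : J ⊆ K) : TransOn T J :=
  fun a ha b hb c hc => h a (hJK ha) b (hJK hb) c (hJK hc)

/-- transitive `k`-subsets of `Q` -/
noncomputable def trS (T : V → V → Prop) (k : ℕ) (Q : Finset V) : Finset (Finset V) :=
  (Q.powersetCard k).filter (fun K => TransOn T K)

lemma mem_trS {k : ℕ} {Q K : Finset V} :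
    K ∈ trS T k Q ↔ K ⊆ Q ∧ K.card = k ∧ TransOn T K := by
  simp [trS, Finset.mem_powersetCard, and_assoc]

lemma trS_mono {k : ℕ} {Q Q' : Finset V} (h : Q ⊆ Q') : trS T k Q ⊆ trS T k Q' := by
  intro K hK
  rw [mem_trS] at hK ⊢
  exact ⟨hK.1.trans h, hK.2⟩

lemma trS_zero (Q : Finset V) : trS T 0 Q = {∅} := by
  ext K
  simp only [mem_trS, Finset.mem_singleton, Finset.card_eq_zero]
  constructor
  · rintro ⟨-, h, -⟩; exact h
  · rintro rfl
    exact ⟨Finset.empty_subset _, rfl, fun a ha => absurd ha (Finset.notMem_empty a)⟩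

lemma exists_source (hT : IsTournament T) {K : Finset V} (hne : K.Nonempty)
    (htr : TransOn T K) : ∃ v ∈ K, ∀ u ∈ K, u ≠ v → T v u := by
  obtain ⟨v, hv, hmax⟩ := K.exists_max_image (fun v => (K.filter (fun u => T v u)).card) hne
  refine ⟨v, hv, ?_⟩
  intro u hu hne'
  by_contra hnc
  have htuv : T u v := tourn_total hT hne'.symm hnc
  have hss : K.filter (fun w => T v w) ⊂ K.filter (fun w => T u w) := by
    constructor
    · intro w hw
      rw [Finset.mem_filter] at hw ⊢
      exact ⟨hw.1, htr u hu v hv w hw.1 htuv hw.2⟩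
    · intro hsub
      have hvmem : v ∈ K.filter (fun w => T u w) := by
        rw [Finset.mem_filter]; exact ⟨hv, htuv⟩
      have := hsub hvmem
      rw [Finset.mem_filter] at this
      exact hT.1 v this.2
  exact absurd (hmax u hu) (not_le.mpr (Finset.card_lt_card hss))

lemma insert_mem_trS (hT : IsTournament T) {D : Finset V} {v : V} (hv : v ∈ D) {j : ℕ}
    {J : Finset V} (hJ : J ∈ trS T j (D.filter (fun u => T v u))) :
    v ∉ J ∧ insert v J ∈ trS T (j + 1) D := by
  rw [mem_trS] at hJ
  obtain ⟨hJD, hJcard, hJtr⟩ := hJ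
  have hall : ∀ u ∈ J, T v u := fun u hu => (Finset.mem_filter.mp (hJD hu)).2
  have hvJ : v ∉ J := fun h => hT.1 v (hall v h)
  refine ⟨hvJ, ?_⟩
  rw [mem_trS]
  refine ⟨?_, ?_, ?_⟩
  · intro u hu
    rcases Finset.mem_insert.mp hu with rfl | h
    · exact hv
    · exact (Finset.mem_filter.mp (hJD h)).1
  · rw [Finset.card_insert_of_notMem hvJ, hJcard]
  · intro a ha b hb c hc hab hbc
    rcases Finset.mem_insert.mp ha with rfl | haJ
    · rcases Finset.mem_insert.mp hc with rfl | hcJ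
      · rcases Finset.mem_insert.mp hb with rfl | hbJ
        · exact absurd hab (hT.1 _)
        · exact absurd hbc (tourn_asymm hT (hall b hbJ))
      · exact hall c hcJ
    · rcases Finset.mem_insert.mp hb with rfl | hbJ
      · exact absurd hab (tourn_asymm hT (hall a haJ))
      · rcases Finset.mem_insert.mp hc with rfl | hcJ
        · exact absurd hbc (tourn_asymm hT (hall b hbJ))
        · exact hJtr a haJ b hbJ c hcJ hab hbc

lemma sum_trS_le (hT : IsTournament T) {D G : Finset V} (hG : G ⊆ D) (j : ℕ) :
    ∑ v ∈ G, (trS T j (D.filter (fun u => T v u))).card ≤ (trS T (j + 1) D).card := by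
  rw [← Finset.card_sigma]
  apply Finset.card_le_card_of_injOn (fun p => insert p.1 p.2)
  · rintro ⟨v, J⟩ hp
    rw [Finset.mem_coe, Finset.mem_sigma] at hp
    exact (insert_mem_trS hT (hG hp.1) hp.2).2
  · rintro ⟨v, J⟩ hp ⟨v', J'⟩ hp' heq
    simp only [Finset.coe_sigma, Set.mem_sigma_iff, Finset.mem_coe] at hp hp'
    simp only at heq
    have hvJ : v ∉ J := (insert_mem_trS hT (hG hp.1) hp.2).1
    have hvJ' : v' ∉ J' := (insert_mem_trS hT (hG hp'.1) hp'.2).1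
    have hallv : ∀ u ∈ J, T v u := fun u hu =>
      (Finset.mem_filter.mp ((mem_trS.mp hp.2).1 hu)).2
    have hallv' : ∀ u ∈ J', T v' u := fun u hu =>
      (Finset.mem_filter.mp ((mem_trS.mp hp'.2).1 hu)).2
    have hvv : v = v' := by
      by_contra hne
      have h1 : v' ∈ insert v J := heq ▸ Finset.mem_insert_self v' J'
      have h2 : v ∈ insert v' J' := heq ▸ Finset.mem_insert_self v J
      rcases Finset.mem_insert.mp h1 with h | h
      · exact hne h.symm
      · rcases Finset.mem_insert.mp h2 with h' | h'
        · exact hne h'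
        · exact tourn_asymm hT (hallv v' h) (hallv' v h')
    subst hvv
    have hJJ : J = J' := by
      have := congrArg (fun s => Finset.erase s v) heq
      simpa [Finset.erase_insert hvJ, Finset.erase_insert hvJ'] using this
    subst hJJ
    rfl



lemma deg_split (hT : IsTournament T) {D : Finset V} {v : V} (hv : v ∈ D) :
    (D.filter (fun u => T v u)).card + (D.filter (fun u => T u v)).card + 1 = D.card := by
  have h1 : D.filter (fun u => ¬ T v u) = insert v (D.filter (fun u => T u v)) := by
    ext u
    simp only [Finset.mem_filter, Finset.mem_insert]
    constructor
    · rintro ⟨huD, hn⟩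
      by_cases he : u = v
      · exact Or.inl he
      · exact Or.inr ⟨huD, tourn_total hT (Ne.symm he) hn⟩
    · rintro (rfl | ⟨huD, h⟩)
      · exact ⟨hv, hT.1 u⟩
      · refine ⟨huD, fun h2 => ?_⟩
        by_cases he : v = u
        · exact hT.1 v (he ▸ h2)
        · exact (hT.2 v u he).mp h2 h
  have h2 : v ∉ D.filter (fun u => T u v) := by
    rw [Finset.mem_filter]; rintro ⟨-, h⟩; exact hT.1 v h
  have h3 := Finset.card_filter_add_card_filter_not (s := D) (p := fun u => T v u)
  rw [h1, Finset.card_insert_of_notMem h2] at h3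
  omega

lemma sum_deg (hT : IsTournament T) (D : Finset V) :
    2 * ∑ v ∈ D, (D.filter (fun u => T v u)).card + D.card = D.card * D.card := by
  have hsym : ∑ v ∈ D, (D.filter (fun u => T u v)).card
      = ∑ v ∈ D, (D.filter (fun u => T v u)).card := by
    simp only [Finset.card_filter]
    exact Finset.sum_comm
  have h1 : ∑ v ∈ D, ((D.filter (fun u => T v u)).card
      + (D.filter (fun u => T u v)).card + 1) = ∑ _v ∈ D, D.card :=
    Finset.sum_congr rfl (fun v hv => deg_split hT hv)
  rw [Finset.sum_const, smul_eq_mul] at h1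
  simp only [Finset.sum_add_distrib, Finset.sum_const, smul_eq_mul, mul_one] at h1
  omega

lemma many_big (hT : IsTournament T) {D : Finset V} (hD : 2 ≤ D.card) :
    (D.card : ℝ) ≤ 4 * ((D.filter (fun v =>
      (D.card : ℝ) ≤ 8 * ((D.filter (fun u => T v u)).card))).card) := by
  set n := D.card with hn
  set P : V → Prop := fun v => (D.card : ℝ) ≤ 8 * ((D.filter (fun u => T v u)).card) with hP
  have hsplit := Finset.sum_filter_add_sum_filter_not D P
    (fun v => ((D.filter (fun u => T v u)).card : ℝ))
  have hdeg : 2 * ∑ v ∈ D, ((D.filter (fun u => T v u)).card : ℝ) + n = n * n := by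
    exact_mod_cast sum_deg hT D
  -- bound the two pieces
  have hG : ∀ v ∈ D.filter P, ((D.filter (fun u => T v u)).card : ℝ) ≤ n - 1 := by
    intro v hv
    have hvD : v ∈ D := (Finset.mem_filter.mp hv).1
    have hsub : D.filter (fun u => T v u) ⊆ D.erase v := by
      intro u hu
      rw [Finset.mem_filter] at hu
      rw [Finset.mem_erase]
      exact ⟨fun he => hT.1 v (he ▸ hu.2), hu.1⟩
    have := Finset.card_le_card hsub
    rw [Finset.card_erase_of_mem hvD] at this
    have h1n : 1 ≤ n := le_trans (by norm_num) hD
    calc ((D.filter (fun u => T v u)).card : ℝ) ≤ ((n - 1 : ℕ) : ℝ) := by exact_mod_cast this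
      _ = (n : ℝ) - 1 := by push_cast [h1n]; ring
  have hB : ∀ v ∈ D.filter (fun v => ¬ P v),
      ((D.filter (fun u => T v u)).card : ℝ) ≤ n / 8 := by
    intro v hv
    have := (Finset.mem_filter.mp hv).2
    rw [hP] at this
    push_neg at this
    linarith [this]
  have hcards := Finset.card_filter_add_card_filter_not (s := D) (p := P)
  set g := (D.filter P).card with hg
  set b := (D.filter (fun v => ¬ P v)).card with hb
  have hSG : ∑ v ∈ D.filter P, ((D.filter (fun u => T v u)).card : ℝ) ≤ g * (n - 1) := by
    calc ∑ v ∈ D.filter P, ((D.filter (fun u => T v u)).card : ℝ)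
        ≤ ∑ _v ∈ D.filter P, ((n : ℝ) - 1) := Finset.sum_le_sum hG
      _ = g * (n - 1) := by rw [Finset.sum_const, nsmul_eq_mul]
  have hSB : ∑ v ∈ D.filter (fun v => ¬ P v), ((D.filter (fun u => T v u)).card : ℝ)
      ≤ b * (n / 8) := by
    calc ∑ v ∈ D.filter (fun v => ¬ P v), ((D.filter (fun u => T v u)).card : ℝ)
        ≤ ∑ _v ∈ D.filter (fun v => ¬ P v), ((n : ℝ) / 8) := Finset.sum_le_sum hB
      _ = b * (n / 8) := by rw [Finset.sum_const, nsmul_eq_mul]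
  have hgb : (g : ℝ) + b = n := by exact_mod_cast hcards
  have hn2 : (2 : ℝ) ≤ n := by exact_mod_cast hD
  have hg0 : (0 : ℝ) ≤ g := by positivity
  nlinarith [hsplit, hdeg, hSG, hSB, hgb, hn2, hg0]

lemma trS_card_lb (hT : IsTournament T) :
    ∀ (j : ℕ) (D : Finset V), (8 : ℝ)^j ≤ D.card →
      (D.card : ℝ)^j ≤ 4^j * 8^(j.choose 2) * ((trS T j D).card) := by
  intro j
  induction j with
  | zero => intro D _; simp [trS_zero]
  | succ j ih =>
    intro D hD
    set n := D.card with hn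
    have h8 : (8 : ℝ)^j * 8 ≤ n := by rw [← pow_succ]; exact hD
    have h8j : (1 : ℝ) ≤ (8:ℝ)^j := one_le_pow₀ (by norm_num : (1:ℝ) ≤ 8)
    have hD2 : 2 ≤ n := by
      have : (2 : ℝ) ≤ (n : ℝ) := by nlinarith
      exact_mod_cast this
    set G := D.filter (fun v => (D.card : ℝ) ≤ 8 * ((D.filter (fun u => T v u)).card)) with hG
    have hG4 : (n : ℝ) ≤ 4 * G.card := many_big hT hD2
    set C := (4:ℝ)^j * 8^(j.choose 2) with hC
    have hC0 : 0 ≤ C := by positivity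
    set W1 := ((trS T (j+1) D).card : ℝ) with hW1
    have key : ∀ v ∈ G, ((n:ℝ)/8)^j
        ≤ C * ((trS T j (D.filter (fun u => T v u))).card) := by
      intro v hv
      have hP := (Finset.mem_filter.mp hv).2
      have hd8 : (n : ℝ)/8 ≤ ((D.filter (fun u => T v u)).card : ℝ) := by linarith
      have hd8' : (8:ℝ)^j ≤ ((D.filter (fun u => T v u)).card : ℝ) := by
        have : (8:ℝ)^j ≤ (n:ℝ)/8 := by nlinarith
        linarith
      calc ((n:ℝ)/8)^j ≤ (((D.filter (fun u => T v u)).card : ℝ))^j :=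
            pow_le_pow_left₀ (by positivity) hd8 j
        _ ≤ C * ((trS T j (D.filter (fun u => T v u))).card) := ih _ hd8'
    have hsumW : ∑ v ∈ G, ((trS T j (D.filter (fun u => T v u))).card : ℝ) ≤ W1 := by
      rw [hW1]
      exact_mod_cast sum_trS_le hT (Finset.filter_subset _ D) j
    have hGsum : (G.card : ℝ) * ((n:ℝ)/8)^j ≤ C * W1 := by
      calc (G.card : ℝ) * ((n:ℝ)/8)^j = ∑ _v ∈ G, ((n:ℝ)/8)^j := by
            rw [Finset.sum_const, nsmul_eq_mul]
        _ ≤ ∑ v ∈ G, C * ((trS T j (D.filter (fun u => T v u))).card : ℝ) :=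
            Finset.sum_le_sum key
        _ = C * ∑ v ∈ G, ((trS T j (D.filter (fun u => T v u))).card : ℝ) := by
            rw [Finset.mul_sum]
        _ ≤ C * W1 := mul_le_mul_of_nonneg_left hsumW hC0
    have e1 : ((n:ℝ)/8)^j * 8^j = (n:ℝ)^j := by
      rw [div_pow]; field_simp
    have hch : (j+1).choose 2 = j.choose 2 + j := by
      rw [Nat.choose_succ_succ]
      simp [Nat.choose_one_right, Nat.add_comm]
    calc (n:ℝ)^(j+1) = (n:ℝ) * (((n:ℝ)/8)^j * 8^j) := by rw [e1]; ring
      _ ≤ (4 * G.card) * (((n:ℝ)/8)^j * 8^j) := by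
          apply mul_le_mul_of_nonneg_right hG4
          positivity
      _ = 4 * 8^j * ((G.card : ℝ) * ((n:ℝ)/8)^j) := by ring
      _ ≤ 4 * 8^j * (C * W1) := by
          apply mul_le_mul_of_nonneg_left hGsum
          positivity
      _ = 4^(j+1) * 8^((j+1).choose 2) * W1 := by
          rw [hch, pow_add, pow_succ, hC]; ring

lemma deg_exchange (R : V → V → Prop) (A Q : Finset V) :
    ∑ x ∈ A, (Q.filter (fun v => R v x)).card
      = ∑ v ∈ Q, (A.filter (fun x => R v x)).card := by
  simp_rw [Finset.card_filter]
  exact Finset.sum_comm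

lemma M_eq (k : ℕ) (R : V → V → Prop) (A Q : Finset V) :
    ∑ x ∈ A, ((trS T k (Q.filter (fun v => R v x))).card)
      = ∑ K ∈ trS T k Q, (A.filter (fun x => ∀ v ∈ K, R v x)).card := by
  have h1 : ∀ x : V, trS T k (Q.filter (fun v => R v x))
      = (trS T k Q).filter (fun K => ∀ v ∈ K, R v x) := by
    intro x; ext K
    simp only [mem_trS, Finset.mem_filter]
    constructor
    · rintro ⟨hsub, hcard, htr⟩
      exact ⟨⟨fun u hu => (Finset.mem_filter.mp (hsub hu)).1, hcard, htr⟩,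
        fun v hv => (Finset.mem_filter.mp (hsub hv)).2⟩
    · rintro ⟨⟨hsub, hcard, htr⟩, hall⟩
      exact ⟨fun u hu => Finset.mem_filter.mpr ⟨hsub hu, hall u hu⟩, hcard, htr⟩
  simp_rw [h1, Finset.card_filter]
  exact Finset.sum_comm

/-- the collection of good (head-like) transitive `k`-subsets of `S` -/
noncomputable def goodF (T R : V → V → Prop) (k : ℕ) (A S : Finset V) : Finset (Finset V) :=
  (trS T k S).filter (fun K => (A.card : ℝ)
    ≤ 2^(6*k) * ((A.filter (fun x => ∀ v ∈ K, R v x)).card))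

lemma caseA (hT : IsTournament T) (k : ℕ) (R : V → V → Prop) (A S Q : Finset V)
    (hQS : Q ⊆ S)
    (hc : 2 * (A.card : ℝ) * ((trS T k Q).card)
      ≤ 2^(6*k) * ∑ x ∈ A, ((trS T k (Q.filter (fun v => R v x))).card : ℝ)) :
    ((trS T k Q).card : ℝ) ≤ 2^(6*k) * ((goodF T R k A S).card) := by
  classical
  set g : Finset V → Prop := fun K => (A.card : ℝ)
    ≤ 2^(6*k) * ((A.filter (fun x => ∀ v ∈ K, R v x)).card) with hg
  have hGq : ((trS T k Q).filter g).card ≤ (goodF T R k A S).card := by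
    rw [goodF]
    exact Finset.card_le_card (Finset.filter_subset_filter g (trS_mono hQS))
  have hM : ∑ x ∈ A, ((trS T k (Q.filter (fun v => R v x))).card : ℝ)
      = ∑ K ∈ trS T k Q, ((A.filter (fun x => ∀ v ∈ K, R v x)).card : ℝ) := by
    exact_mod_cast congrArg (fun m : ℕ => (m : ℝ)) (M_eq k R A Q)
  rw [hM] at hc
  have hsplit := Finset.sum_filter_add_sum_filter_not (trS T k Q) g
    (fun K => ((A.filter (fun x => ∀ v ∈ K, R v x)).card : ℝ))
  have hgood : ∑ K ∈ (trS T k Q).filter g,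
      ((A.filter (fun x => ∀ v ∈ K, R v x)).card : ℝ)
      ≤ (((trS T k Q).filter g).card : ℝ) * A.card := by
    calc ∑ K ∈ (trS T k Q).filter g, ((A.filter (fun x => ∀ v ∈ K, R v x)).card : ℝ)
        ≤ ∑ _K ∈ (trS T k Q).filter g, (A.card : ℝ) := by
          apply Finset.sum_le_sum
          intro K _
          exact_mod_cast Finset.card_le_card (Finset.filter_subset _ A)
      _ = (((trS T k Q).filter g).card : ℝ) * A.card := by
          rw [Finset.sum_const, nsmul_eq_mul]
  have hbad : ∑ K ∈ (trS T k Q).filter (fun K => ¬ g K),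
      ((A.filter (fun x => ∀ v ∈ K, R v x)).card : ℝ)
      ≤ (((trS T k Q).card : ℝ)) * ((A.card : ℝ) / 2^(6*k)) := by
    calc ∑ K ∈ (trS T k Q).filter (fun K => ¬ g K),
        ((A.filter (fun x => ∀ v ∈ K, R v x)).card : ℝ)
        ≤ ∑ _K ∈ (trS T k Q).filter (fun K => ¬ g K), ((A.card : ℝ) / 2^(6*k)) := by
          apply Finset.sum_le_sum
          intro K hK
          have hnK := (Finset.mem_filter.mp hK).2
          rw [hg] at hnK
          push_neg at hnK
          rw [le_div_iff₀ (by positivity : (0:ℝ) < 2^(6*k))]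
          nlinarith [hnK]
      _ = ((((trS T k Q).filter (fun K => ¬ g K)).card : ℝ)) * ((A.card : ℝ) / 2^(6*k)) := by
          rw [Finset.sum_const, nsmul_eq_mul]
      _ ≤ (((trS T k Q).card : ℝ)) * ((A.card : ℝ) / 2^(6*k)) := by
          apply mul_le_mul_of_nonneg_right _ (by positivity)
          exact_mod_cast Finset.card_le_card (Finset.filter_subset _ _)
  by_cases hA : A.card = 0
  · -- every K is good
    have hgall : ∀ K ∈ trS T k Q, g K := by
      intro K _
      rw [hg, hA]
      push_cast
      positivity
    have : (trS T k Q).filter g = trS T k Q := Finset.filter_true_of_mem hgall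
    have h1 : ((trS T k Q).card : ℝ) ≤ 2^(6*k) * (((trS T k Q).filter g).card) := by
      rw [this]
      have h1p : (1:ℝ) ≤ (2:ℝ)^(6*k) := one_le_pow₀ (by norm_num : (1:ℝ) ≤ 2)
      nlinarith [(by positivity : (0:ℝ) ≤ ((trS T k Q).card : ℝ))]
    calc ((trS T k Q).card : ℝ) ≤ 2^(6*k) * (((trS T k Q).filter g).card) := h1
      _ ≤ _ := by
        apply mul_le_mul_of_nonneg_left _ (by positivity)
        exact_mod_cast hGq
  · have hA0 : (0:ℝ) < A.card := by
      have : 0 < A.card := Nat.pos_of_ne_zero hA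
      exact_mod_cast this
    have h2k : (0:ℝ) < 2^(6*k) := by positivity
    -- 2|A|W ≤ 2^{6k}(Gq*|A| + W*|A|/2^{6k}) = 2^{6k} Gq |A| + W |A|
    have hchain : 2 * (A.card : ℝ) * ((trS T k Q).card)
        ≤ 2^(6*k) * ((((trS T k Q).filter g).card : ℝ) * A.card)
          + ((trS T k Q).card : ℝ) * A.card := by
      have := hc
      rw [← hsplit] at this
      have hmul : 2^(6*k) * (∑ K ∈ (trS T k Q).filter g,
          ((A.filter (fun x => ∀ v ∈ K, R v x)).card : ℝ)
          + ∑ K ∈ (trS T k Q).filter (fun K => ¬ g K),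
          ((A.filter (fun x => ∀ v ∈ K, R v x)).card : ℝ))
          ≤ 2^(6*k) * ((((trS T k Q).filter g).card : ℝ) * A.card
            + ((trS T k Q).card : ℝ) * ((A.card : ℝ) / 2^(6*k))) := by
        apply mul_le_mul_of_nonneg_left _ (le_of_lt h2k)
        linarith [hgood, hbad]
      have heq : 2^(6*k) * ((((trS T k Q).filter g).card : ℝ) * A.card
          + ((trS T k Q).card : ℝ) * ((A.card : ℝ) / 2^(6*k)))
          = 2^(6*k) * ((((trS T k Q).filter g).card : ℝ) * A.card)
            + ((trS T k Q).card : ℝ) * A.card := by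
        field_simp
      linarith [this, hmul, heq.le, heq.ge]
    have hfin : (A.card : ℝ) * ((trS T k Q).card)
        ≤ (A.card : ℝ) * (2^(6*k) * (((trS T k Q).filter g).card)) := by
      nlinarith [hchain]
    have := le_of_mul_le_mul_left hfin hA0
    calc ((trS T k Q).card : ℝ) ≤ 2^(6*k) * (((trS T k Q).filter g).card) := this
      _ ≤ _ := by
        apply mul_le_mul_of_nonneg_left _ (by positivity)
        exact_mod_cast hGq

lemma caseB (hT : IsTournament T) (k : ℕ) (hk : 1 ≤ k) (R : V → V → Prop)
    (A S Q : Finset V) (hQS : Q ⊆ S)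
    (hdeg : ∀ v ∈ S, (A.card : ℝ) ≤ 20 * ((A.filter (fun x => R v x)).card))
    (hQ0 : 0 < Q.card)
    (hc : ¬ (2 * (A.card : ℝ) * ((trS T k Q).card)
      ≤ 2^(6*k) * ∑ x ∈ A, ((trS T k (Q.filter (fun v => R v x))).card : ℝ))) :
    ∃ x ∈ A, (Q.card : ℝ) ≤ 40 * ((Q.filter (fun v => R v x)).card) ∧
      ((trS T k (Q.filter (fun v => R v x))).card : ℝ) * (Q.card : ℝ)^k
        ≤ (2 * 20^k / ((2:ℝ)^(6*k) - 2^(5*k))) * ((trS T k Q).card)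
          * ((Q.filter (fun v => R v x)).card : ℝ)^k := by
  classical
  set m := Q.card with hm
  set W := ((trS T k Q).card : ℝ) with hW
  have hW0 : 0 ≤ W := by positivity
  have hm0 : (0:ℝ) < m := by exact_mod_cast hQ0
  have h2k6 : (0:ℝ) < 2^(6*k) := by positivity
  -- A is nonempty
  have hA0 : (0:ℝ) < A.card := by
    rcases Nat.eq_zero_or_pos A.card with h | h
    · exfalso
      apply hc
      have hAe : A = ∅ := Finset.card_eq_zero.mp h
      rw [hAe]
      simp
    · exact_mod_cast h
  have hden : (0:ℝ) < (2:ℝ)^(6*k) - 2^(5*k) := by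
    have : (2:ℝ)^(5*k) < 2^(6*k) := by
      apply pow_lt_pow_right₀ (by norm_num)
      omega
    linarith
  set ρ := 2 * (20:ℝ)^k / ((2:ℝ)^(6*k) - 2^(5*k)) with hρ
  have hρ0 : 0 < ρ := by positivity
  -- power mean
  have hsum1 : (m : ℝ) * A.card / 20 ≤ ∑ x ∈ A, ((Q.filter (fun v => R v x)).card : ℝ) := by
    have hex : ∑ x ∈ A, ((Q.filter (fun v => R v x)).card : ℝ)
        = ∑ v ∈ Q, ((A.filter (fun x => R v x)).card : ℝ) := by
      exact_mod_cast congrArg (fun m : ℕ => (m : ℝ)) (deg_exchange R A Q)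
    rw [hex]
    have : ∑ v ∈ Q, (A.card : ℝ) / 20 ≤ ∑ v ∈ Q, ((A.filter (fun x => R v x)).card : ℝ) := by
      apply Finset.sum_le_sum
      intro v hv
      have := hdeg v (hQS hv)
      linarith
    rw [Finset.sum_const, nsmul_eq_mul] at this
    calc (m:ℝ) * A.card / 20 = (m:ℝ) * ((A.card:ℝ)/20) := by ring
      _ ≤ _ := this
  have hpm : (A.card : ℝ) * ((m:ℝ)/20)^k
      ≤ ∑ x ∈ A, ((Q.filter (fun v => R v x)).card : ℝ)^k := by
    have hk' : k - 1 + 1 = k := Nat.succ_pred_eq_of_pos hk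
    have h := pow_sum_div_card_le_sum_pow (s := A)
      (f := fun x => ((Q.filter (fun v => R v x)).card : ℝ))
      (fun i _ => by positivity) (k-1)
    rw [hk'] at h
    have hmono : ((m:ℝ) * A.card / 20)^k
        ≤ (∑ x ∈ A, ((Q.filter (fun v => R v x)).card : ℝ))^k := by
      apply pow_le_pow_left₀ (by positivity) hsum1
    have hAk : (A.card:ℝ)^k = (A.card:ℝ)^(k-1) * A.card := by
      rw [← pow_succ, hk']
    have hAne : (A.card:ℝ)^(k-1) ≠ 0 := by positivity
    have heq0 : ((m:ℝ) * A.card / 20)^k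
        = (A.card:ℝ)^(k-1) * ((A.card:ℝ) * ((m:ℝ)/20)^k) := by
      have : (m:ℝ) * A.card / 20 = (A.card:ℝ) * ((m:ℝ)/20) := by ring
      rw [this, mul_pow, hAk]
      ring
    have heq : ((m:ℝ) * A.card / 20)^k / (A.card:ℝ)^(k-1)
        = (A.card:ℝ) * ((m:ℝ)/20)^k := by
      rw [heq0, mul_div_cancel_left₀ _ hAne]
    calc (A.card : ℝ) * ((m:ℝ)/20)^k
        = ((m:ℝ) * A.card / 20)^k / (A.card:ℝ)^(k-1) := heq.symm
      _ ≤ (∑ x ∈ A, ((Q.filter (fun v => R v x)).card : ℝ))^k / (A.card:ℝ)^(k-1) := by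
          gcongr
      _ ≤ _ := h
  -- heavy set
  set H := A.filter (fun x => (m : ℝ) ≤ 40 * ((Q.filter (fun v => R v x)).card)) with hH
  have hHsum : (A.card:ℝ) * (((m:ℝ)/20)^k - ((m:ℝ)/40)^k)
      ≤ ∑ x ∈ H, ((Q.filter (fun v => R v x)).card : ℝ)^k := by
    have hsplit := Finset.sum_filter_add_sum_filter_not A
      (fun x => (m : ℝ) ≤ 40 * ((Q.filter (fun v => R v x)).card))
      (fun x => ((Q.filter (fun v => R v x)).card : ℝ)^k)
    have hnot : ∑ x ∈ A.filter (fun x => ¬ ((m : ℝ) ≤ 40 * ((Q.filter (fun v => R v x)).card))),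
        ((Q.filter (fun v => R v x)).card : ℝ)^k ≤ (A.card:ℝ) * ((m:ℝ)/40)^k := by
      calc ∑ x ∈ A.filter (fun x => ¬ ((m : ℝ) ≤ 40 * ((Q.filter (fun v => R v x)).card))),
          ((Q.filter (fun v => R v x)).card : ℝ)^k
          ≤ ∑ _x ∈ A.filter (fun x => ¬ ((m : ℝ) ≤ 40 * ((Q.filter (fun v => R v x)).card))),
            ((m:ℝ)/40)^k := by
            apply Finset.sum_le_sum
            intro x hx
            have hxx := (Finset.mem_filter.mp hx).2
            push_neg at hxx
            apply pow_le_pow_left₀ (by positivity)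
            linarith
        _ = ((A.filter (fun x => ¬ ((m : ℝ) ≤ 40 * ((Q.filter (fun v => R v x)).card)))).card : ℝ)
            * ((m:ℝ)/40)^k := by rw [Finset.sum_const, nsmul_eq_mul]
        _ ≤ (A.card:ℝ) * ((m:ℝ)/40)^k := by
            apply mul_le_mul_of_nonneg_right _ (by positivity)
            exact_mod_cast Finset.card_le_card (Finset.filter_subset _ _)
    have := hpm
    rw [← hsplit] at this
    linarith
  by_contra hno
  push_neg at hno
  have hkey : ∀ x ∈ H, ρ * W * ((Q.filter (fun v => R v x)).card : ℝ)^k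
      ≤ ((trS T k (Q.filter (fun v => R v x))).card : ℝ) * (m:ℝ)^k := by
    intro x hx
    have hxA := (Finset.mem_filter.mp hx).1
    have hxP := (Finset.mem_filter.mp hx).2
    have := hno x hxA hxP
    rw [hρ]
    linarith [this]
  have hsumH : ρ * W * ((A.card:ℝ) * (((m:ℝ)/20)^k - ((m:ℝ)/40)^k))
      ≤ (∑ x ∈ H, ((trS T k (Q.filter (fun v => R v x))).card : ℝ)) * (m:ℝ)^k := by
    calc ρ * W * ((A.card:ℝ) * (((m:ℝ)/20)^k - ((m:ℝ)/40)^k))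
        ≤ ρ * W * (∑ x ∈ H, ((Q.filter (fun v => R v x)).card : ℝ)^k) := by
          apply mul_le_mul_of_nonneg_left hHsum (by positivity)
      _ = ∑ x ∈ H, ρ * W * ((Q.filter (fun v => R v x)).card : ℝ)^k := by
          rw [Finset.mul_sum]
      _ ≤ ∑ x ∈ H, ((trS T k (Q.filter (fun v => R v x))).card : ℝ) * (m:ℝ)^k :=
          Finset.sum_le_sum hkey
      _ = _ := by rw [← Finset.sum_mul]
  have h40 : (40:ℝ)^k = 20^k * 2^k := by rw [← mul_pow]; norm_num
  have h26 : (2:ℝ)^(6*k) = 2^(5*k) * 2^k := by rw [← pow_add]; congr 1; omega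
  have hid : ρ * (((m:ℝ)/20)^k - ((m:ℝ)/40)^k) = 2 * (m:ℝ)^k / 2^(6*k) := by
    rw [hρ, div_pow, div_pow, h40]
    rw [div_sub_div _ _ (by positivity : ((20:ℝ)^k) ≠ 0) (by positivity : ((20:ℝ)^k * 2^k) ≠ 0)]
    rw [h26]
    have h2k0 : ((2:ℝ)^k) ≠ 0 := by positivity
    have h20k0 : ((20:ℝ)^k) ≠ 0 := by positivity
    have h25k0 : ((2:ℝ)^(5*k)) ≠ 0 := by positivity
    have hden' : (2:ℝ)^(5*k) * 2^k - 2^(5*k) ≠ 0 := by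
      rw [← h26]; exact hden.ne'
    field_simp
    have hx : (-1 + (2:ℝ)^k) ≠ 0 := by
      have : (1:ℝ) < 2^k := one_lt_pow₀ (by norm_num) (by omega)
      intro h; linarith
    calc _ = (-1 + (2:ℝ)^k)⁻¹ * (-1 + 2^k) := by ring
      _ = 1 := inv_mul_cancel₀ hx
  have hMH : ∑ x ∈ H, ((trS T k (Q.filter (fun v => R v x))).card : ℝ)
      ≤ ∑ x ∈ A, ((trS T k (Q.filter (fun v => R v x))).card : ℝ) := by
    apply Finset.sum_le_sum_of_subset_of_nonneg (Finset.filter_subset _ _)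
    intro x _ _
    positivity
  have hlt : 2^(6*k) * ∑ x ∈ A, ((trS T k (Q.filter (fun v => R v x))).card : ℝ)
      < 2 * (A.card:ℝ) * W := not_le.mp hc
  -- combine everything
  have hmk0 : (0:ℝ) < (m:ℝ)^k := by positivity
  have hfin : 2 * (A.card:ℝ) * W * (m:ℝ)^k
      ≤ 2^(6*k) * ((∑ x ∈ H, ((trS T k (Q.filter (fun v => R v x))).card : ℝ)) * (m:ℝ)^k) := by
    have e1 : ρ * W * ((A.card:ℝ) * (((m:ℝ)/20)^k - ((m:ℝ)/40)^k))
        = W * (A.card:ℝ) * (ρ * (((m:ℝ)/20)^k - ((m:ℝ)/40)^k)) := by ring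
    rw [e1, hid] at hsumH
    have e2 : W * (A.card:ℝ) * (2 * (m:ℝ)^k / 2^(6*k)) * 2^(6*k)
        = 2 * (A.card:ℝ) * W * (m:ℝ)^k := by
      field_simp
    calc 2 * (A.card:ℝ) * W * (m:ℝ)^k
        = W * (A.card:ℝ) * (2 * (m:ℝ)^k / 2^(6*k)) * 2^(6*k) := e2.symm
      _ ≤ (∑ x ∈ H, ((trS T k (Q.filter (fun v => R v x))).card : ℝ)) * (m:ℝ)^k * 2^(6*k) := by
          apply mul_le_mul_of_nonneg_right hsumH (le_of_lt h2k6)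
      _ = 2^(6*k) * ((∑ x ∈ H, ((trS T k (Q.filter (fun v => R v x))).card : ℝ)) * (m:ℝ)^k) := by
          ring
  have hcontr : 2 * (A.card:ℝ) * W * (m:ℝ)^k < 2 * (A.card:ℝ) * W * (m:ℝ)^k := by
    calc 2 * (A.card:ℝ) * W * (m:ℝ)^k
        ≤ 2^(6*k) * ((∑ x ∈ H, ((trS T k (Q.filter (fun v => R v x))).card : ℝ)) * (m:ℝ)^k) := hfin
      _ ≤ 2^(6*k) * ((∑ x ∈ A, ((trS T k (Q.filter (fun v => R v x))).card : ℝ)) * (m:ℝ)^k) := by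
          apply mul_le_mul_of_nonneg_left _ (le_of_lt h2k6)
          apply mul_le_mul_of_nonneg_right hMH (le_of_lt hmk0)
      _ = (2^(6*k) * (∑ x ∈ A, ((trS T k (Q.filter (fun v => R v x))).card : ℝ))) * (m:ℝ)^k := by
          ring
      _ < 2 * (A.card:ℝ) * W * (m:ℝ)^k := by
          apply mul_lt_mul_of_pos_right hlt hmk0
  exact absurd hcontr (lt_irrefl _)

lemma DES_caseA (hT : IsTournament T) (k : ℕ) (R : V → V → Prop) (A S Q : Finset V)
    (hQS : Q ⊆ S) (t : ℕ) (hsize : (8:ℝ)^k ≤ Q.card)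
    (hc : 2 * (A.card : ℝ) * ((trS T k Q).card)
      ≤ 2^(6*k) * ∑ x ∈ A, ((trS T k (Q.filter (fun v => R v x))).card : ℝ)) :
    (((4:ℝ)^k * 8^(k.choose 2))⁻¹ / 2^(6*k)) * ((Q.card:ℝ)/40^t)^k
      ≤ ((goodF T R k A S).card : ℝ) := by
  have hWlb := trS_card_lb hT k Q hsize
  have hA := caseA hT k R A S Q hQS hc
  have hC0 : (0:ℝ) < 4^k * 8^(k.choose 2) := by positivity
  have h40 : (1:ℝ) ≤ 40^t := one_le_pow₀ (by norm_num : (1:ℝ) ≤ 40)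
  have hdiv : ((Q.card:ℝ)/40^t)^k ≤ (Q.card:ℝ)^k := by
    apply pow_le_pow_left₀ (by positivity)
    exact div_le_self (by positivity) h40
  have h1 : (Q.card:ℝ)^k
      ≤ (4^k * 8^(k.choose 2)) * (2^(6*k) * ((goodF T R k A S).card)) := by
    calc (Q.card:ℝ)^k ≤ (4^k * 8^(k.choose 2)) * ((trS T k Q).card) := hWlb
      _ ≤ _ := mul_le_mul_of_nonneg_left hA (le_of_lt hC0)
  have h2 : (((4:ℝ)^k * 8^(k.choose 2))⁻¹ / 2^(6*k)) * ((Q.card:ℝ)/40^t)^k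
      ≤ (((4:ℝ)^k * 8^(k.choose 2))⁻¹ / 2^(6*k))
        * ((4^k * 8^(k.choose 2)) * (2^(6*k) * ((goodF T R k A S).card))) :=
    mul_le_mul_of_nonneg_left (le_trans hdiv h1) (by positivity)
  have h3 : (((4:ℝ)^k * 8^(k.choose 2))⁻¹ / 2^(6*k))
      * ((4^k * 8^(k.choose 2)) * (2^(6*k) * ((goodF T R k A S).card)))
      = ((goodF T R k A S).card : ℝ) := by
    field_simp
  linarith

lemma rho_lt_one (k : ℕ) (hk2 : 2 ≤ k) :
    2 * (20:ℝ)^k / ((2:ℝ)^(6*k) - 2^(5*k)) < 1 := by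
  have hden : (0:ℝ) < (2:ℝ)^(6*k) - 2^(5*k) := by
    have : (2:ℝ)^(5*k) < 2^(6*k) := by
      apply pow_lt_pow_right₀ (by norm_num)
      omega
    linarith
  rw [div_lt_one hden]
  have h1 : (20:ℝ)^k < 2^(5*k) := by
    have : (20:ℝ)^k < 32^k := by
      apply pow_lt_pow_left₀ (by norm_num) (by norm_num)
      omega
    calc (20:ℝ)^k < 32^k := this
      _ = 2^(5*k) := by rw [pow_mul]; norm_num
  have h2 : (2:ℝ)^(6*k) = 2^(5*k) * 2^k := by rw [← pow_add]; congr 1; omega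
  have h3 : (4:ℝ) ≤ 2^k := by
    calc (4:ℝ) = 2^2 := by norm_num
      _ ≤ 2^k := by
        apply pow_le_pow_right₀ (by norm_num)
        omega
  nlinarith [pow_pos (by norm_num : (0:ℝ) < 2) (5*k)]

lemma DES (hT : IsTournament T) (k : ℕ) (hk2 : 2 ≤ k) (R : V → V → Prop) (A S : Finset V)
    (hdeg : ∀ v ∈ S, (A.card : ℝ) ≤ 20 * ((A.filter (fun x => R v x)).card)) :
    ∀ t : ℕ, ∀ Q : Finset V, Q ⊆ S →
      (40:ℝ) * 8^k * 40^t ≤ Q.card →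
      ((trS T k Q).card : ℝ) * (2 * 20^k / ((2:ℝ)^(6*k) - 2^(5*k)))^t
        ≤ ((4:ℝ)^k * 8^(k.choose 2))⁻¹ * (Q.card:ℝ)^k →
      (((4:ℝ)^k * 8^(k.choose 2))⁻¹ / 2^(6*k)) * ((Q.card:ℝ)/40^t)^k
        ≤ ((goodF T R k A S).card : ℝ) := by
  classical
  have hk : 1 ≤ k := by omega
  have hden : (0:ℝ) < (2:ℝ)^(6*k) - 2^(5*k) := by
    have : (2:ℝ)^(5*k) < 2^(6*k) := by
      apply pow_lt_pow_right₀ (by norm_num)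
      omega
    linarith
  set ρ := 2 * (20:ℝ)^k / ((2:ℝ)^(6*k) - 2^(5*k)) with hρ
  have hρ0 : 0 < ρ := by positivity
  have hρ1 : ρ < 1 := rho_lt_one k hk2
  set C := (4:ℝ)^k * 8^(k.choose 2) with hC
  have hC0 : (0:ℝ) < C := by positivity
  intro t
  induction t with
  | zero =>
    intro Q hQS hsize hpot
    by_cases hc : 2 * (A.card : ℝ) * ((trS T k Q).card)
        ≤ 2^(6*k) * ∑ x ∈ A, ((trS T k (Q.filter (fun v => R v x))).card : ℝ)
    · apply DES_caseA hT k R A S Q hQS 0 _ hc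
      have h8 : (8:ℝ)^k ≤ 40 * 8^k * 40^0 := by
        rw [pow_zero]
        nlinarith [pow_pos (by norm_num : (0:ℝ) < 8) k]
      linarith
    · exfalso
      have hm0 : 0 < Q.card := by
        have : (0:ℝ) < Q.card := by
          have : (0:ℝ) < 40 * 8^k * 40^0 := by positivity
          linarith
        exact_mod_cast this
      obtain ⟨x, hxA, hx40, hxW⟩ := caseB hT k hk R A S Q hQS hdeg hm0 hc
      set Q' := Q.filter (fun v => R v x) with hQ'
      have hQ'size : (8:ℝ)^k ≤ Q'.card := by
        rw [pow_zero, mul_one] at hsize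
        have : (40:ℝ) * 8^k ≤ 40 * Q'.card := by linarith
        linarith
      have hWlb' := trS_card_lb hT k Q' hQ'size
      -- W' ≤ ρ * Φ * Q'^k
      rw [pow_zero, mul_one] at hpot
      have hmk : (0:ℝ) < (Q.card:ℝ)^k := by
        have : (0:ℝ) < Q.card := by exact_mod_cast hm0
        positivity
      have h1 : ((trS T k Q').card : ℝ) * (Q.card:ℝ)^k
          ≤ ρ * (C⁻¹ * (Q.card:ℝ)^k) * ((Q'.card:ℝ))^k := by
        calc ((trS T k Q').card : ℝ) * (Q.card:ℝ)^k
            ≤ ρ * ((trS T k Q).card) * ((Q'.card:ℝ))^k := hxW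
          _ ≤ ρ * (C⁻¹ * (Q.card:ℝ)^k) * ((Q'.card:ℝ))^k := by
              apply mul_le_mul_of_nonneg_right _ (by positivity)
              apply mul_le_mul_of_nonneg_left hpot (le_of_lt hρ0)
      have h2 : ((trS T k Q').card : ℝ) ≤ ρ * C⁻¹ * ((Q'.card:ℝ))^k := by
        have := h1
        have e : ρ * (C⁻¹ * (Q.card:ℝ)^k) * ((Q'.card:ℝ))^k
            = (ρ * C⁻¹ * ((Q'.card:ℝ))^k) * (Q.card:ℝ)^k := by ring
        rw [e] at this
        exact le_of_mul_le_mul_right this hmk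
      -- but W' ≥ C⁻¹ Q'^k
      have h3 : C⁻¹ * ((Q'.card:ℝ))^k ≤ ((trS T k Q').card : ℝ) := by
        rw [inv_mul_le_iff₀ hC0, hC]
        exact hWlb'
      have hQ'0 : (0:ℝ) < ((Q'.card:ℝ))^k := by
        have h8 : (0:ℝ) < (8:ℝ)^k := by positivity
        have : (0:ℝ) < (Q'.card:ℝ) := lt_of_lt_of_le h8 hQ'size
        positivity
      nlinarith [h2, h3, hQ'0, mul_pos (mul_pos hρ0 (inv_pos.mpr hC0)) hQ'0]
  | succ t ih =>
    intro Q hQS hsize hpot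
    by_cases hc : 2 * (A.card : ℝ) * ((trS T k Q).card)
        ≤ 2^(6*k) * ∑ x ∈ A, ((trS T k (Q.filter (fun v => R v x))).card : ℝ)
    · apply DES_caseA hT k R A S Q hQS (t+1) _ hc
      have h8 : (8:ℝ)^k ≤ 40 * 8^k * 40^(t+1) := by
        have h40 : (1:ℝ) ≤ 40^(t+1) := one_le_pow₀ (by norm_num : (1:ℝ) ≤ 40)
        nlinarith [pow_pos (by norm_num : (0:ℝ) < 8) k]
      linarith
    · have hm0 : 0 < Q.card := by
        have : (0:ℝ) < Q.card := by
          have : (0:ℝ) < 40 * 8^k * 40^(t+1) := by positivity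
          linarith
        exact_mod_cast this
      obtain ⟨x, hxA, hx40, hxW⟩ := caseB hT k hk R A S Q hQS hdeg hm0 hc
      set Q' := Q.filter (fun v => R v x) with hQ'
      have hQ'S : Q' ⊆ S := (Finset.filter_subset _ _).trans hQS
      have hQ'size : (40:ℝ) * 8^k * 40^t ≤ Q'.card := by
        have e : (40:ℝ) * 8^k * 40^(t+1) = 40 * (40 * 8^k * 40^t) := by ring
        rw [e] at hsize
        linarith
      have hmk : (0:ℝ) < (Q.card:ℝ)^k := by
        have : (0:ℝ) < Q.card := by exact_mod_cast hm0
        positivity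
      have hpot' : ((trS T k Q').card : ℝ) * ρ^t ≤ C⁻¹ * ((Q'.card:ℝ))^k := by
        have h1 : ((trS T k Q').card : ℝ) * ρ^t * (Q.card:ℝ)^k
            ≤ C⁻¹ * ((Q'.card:ℝ))^k * (Q.card:ℝ)^k := by
          calc ((trS T k Q').card : ℝ) * ρ^t * (Q.card:ℝ)^k
              = (((trS T k Q').card : ℝ) * (Q.card:ℝ)^k) * ρ^t := by ring
            _ ≤ (ρ * ((trS T k Q).card) * ((Q'.card:ℝ))^k) * ρ^t := by
                apply mul_le_mul_of_nonneg_right hxW (by positivity)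
            _ = (((trS T k Q).card : ℝ) * ρ^(t+1)) * ((Q'.card:ℝ))^k := by
                rw [pow_succ]; ring
            _ ≤ (C⁻¹ * (Q.card:ℝ)^k) * ((Q'.card:ℝ))^k := by
                apply mul_le_mul_of_nonneg_right hpot (by positivity)
            _ = C⁻¹ * ((Q'.card:ℝ))^k * (Q.card:ℝ)^k := by ring
        exact le_of_mul_le_mul_right h1 hmk
      have hres := ih Q' hQ'S hQ'size hpot'
      have hmono : ((Q.card:ℝ)/40^(t+1))^k ≤ ((Q'.card:ℝ)/40^t)^k := by
        apply pow_le_pow_left₀ (by positivity)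
        rw [div_le_div_iff₀ (by positivity) (by positivity)]
        calc (Q.card:ℝ) * 40^t = ((Q.card:ℝ)/40) * 40^(t+1) := by
              rw [pow_succ]; ring
          _ ≤ (Q'.card:ℝ) * 40^(t+1) := by
              apply mul_le_mul_of_nonneg_right _ (by positivity)
              linarith
      calc (C⁻¹ / 2^(6*k)) * ((Q.card:ℝ)/40^(t+1))^k
          ≤ (C⁻¹ / 2^(6*k)) * ((Q'.card:ℝ)/40^t)^k :=
            mul_le_mul_of_nonneg_left hmono (by positivity)
        _ ≤ ((goodF T R k A S).card : ℝ) := hres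

lemma two_mul_choose_two (k : ℕ) : 2 * k.choose 2 = k * (k - 1) := by
  induction k with
  | zero => rfl
  | succ n ih =>
    rw [Nat.choose_succ_succ, Nat.choose_one_right, Nat.mul_add, ih]
    cases n with
    | zero => rfl
    | succ m =>
      simp only [Nat.succ_sub_one]
      ring

lemma pow4_eq (n : ℕ) : (4:ℕ)^n = 2^(2*n) := by rw [pow_mul]; norm_num
lemma pow8_eq (n : ℕ) : (8:ℕ)^n = 2^(3*n) := by rw [pow_mul]; norm_num
lemma pow64_eq (n : ℕ) : (64:ℕ)^n = 2^(6*n) := by rw [pow_mul]; norm_num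
lemma pow20_le (b : ℕ) : (20:ℕ)^(10*b) ≤ 2^(44*b) := by
  rw [pow_mul, pow_mul]
  exact Nat.pow_le_pow_left (by norm_num) b

lemma exp_ineq1 (k : ℕ) (hk2 : 2 ≤ k) :
    20*(k+4)+20*k+30*(k.choose 2) + 44*(k*(k+4)) ≤ 10*(6*k*(k+4)) := by
  have h := two_mul_choose_two k
  obtain ⟨j, rfl⟩ : ∃ j, k = j + 2 := ⟨k - 2, by omega⟩
  have h' : 2 * ((j+2).choose 2) = (j+2) * (j+1) := by
    rw [h]; congr 1
  nlinarith [h', sq_nonneg j]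

lemma exp_ineq2 (k : ℕ) (hk2 : 2 ≤ k) :
    6*k + (2*k + 3*(k.choose 2)) + 6*((k+4)*k) < 30*k^2 := by
  have h := two_mul_choose_two k
  obtain ⟨j, rfl⟩ : ∃ j, k = j + 2 := ⟨k - 2, by omega⟩
  have h' : 2 * ((j+2).choose 2) = (j+2) * (j+1) := by
    rw [h]; congr 1
  nlinarith [h', sq_nonneg j]

lemma nat_size (k : ℕ) (hk2 : 2 ≤ k) : (40:ℕ) * 8^k * 40^(k+4) ≤ 2^(30*k) := by
  calc (40:ℕ) * 8^k * 40^(k+4) = 8^k * 40^(k+5) := by rw [pow_succ]; ring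
    _ ≤ 8^k * 64^(k+5) := Nat.mul_le_mul_left _ (Nat.pow_le_pow_left (by norm_num) _)
    _ = 2^(3*k) * 2^(6*(k+5)) := by rw [pow8_eq, pow64_eq]
    _ = 2^(3*k + 6*(k+5)) := (pow_add 2 _ _).symm
    _ ≤ 2^(30*k) := Nat.pow_le_pow_right (by norm_num) (by omega)

lemma nat_pot (k : ℕ) (hk2 : 2 ≤ k) :
    (4 * 20^k)^(k+4) * (4^k * 8^(k.choose 2)) ≤ (2^(6*k))^(k+4) := by
  apply (Nat.pow_le_pow_iff_left (by norm_num : (10:ℕ) ≠ 0)).mp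
  calc ((4 * 20^k)^(k+4) * (4^k * 8^(k.choose 2)))^10
      = 4^(10*(k+4)) * 20^(10*(k*(k+4))) * (4^(10*k) * 8^(10*(k.choose 2))) := by
        simp only [mul_pow, ← pow_mul]
        ring
    _ = 2^(20*(k+4)+20*k+30*(k.choose 2)) * 20^(10*(k*(k+4))) := by
        rw [pow4_eq, pow4_eq, pow8_eq]
        rw [show 2*(10*(k+4)) = 20*(k+4) by ring, show 2*(10*k) = 20*k by ring,
          show 3*(10*(k.choose 2)) = 30*(k.choose 2) by ring]
        rw [pow_add, pow_add]
        ring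
    _ ≤ 2^(20*(k+4)+20*k+30*(k.choose 2)) * 2^(44*(k*(k+4))) :=
        Nat.mul_le_mul_left _ (pow20_le _)
    _ = 2^(20*(k+4)+20*k+30*(k.choose 2) + 44*(k*(k+4))) := (pow_add 2 _ _).symm
    _ ≤ 2^(10*(6*k*(k+4))) := Nat.pow_le_pow_right (by norm_num) (exp_ineq1 k hk2)
    _ = ((2^(6*k))^(k+4))^10 := by
        rw [← pow_mul, ← pow_mul]
        congr 1
        ring

lemma nat_fin (k : ℕ) (hk2 : 2 ≤ k) :
    2^(6*k) * (4^k * 8^(k.choose 2)) * (40^(k+4))^k < 2^(30*k^2) := by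
  calc 2^(6*k) * (4^k * 8^(k.choose 2)) * ((40:ℕ)^(k+4))^k
      ≤ 2^(6*k) * (4^k * 8^(k.choose 2)) * (((64:ℕ))^(k+4))^k :=
        Nat.mul_le_mul_left _
          (Nat.pow_le_pow_left (Nat.pow_le_pow_left (by norm_num) _) _)
    _ = 2^(6*k) * (2^(2*k) * 2^(3*(k.choose 2))) * 2^(6*((k+4)*k)) := by
        rw [pow4_eq, pow8_eq, ← pow_mul, pow64_eq]
    _ = 2^(6*k + (2*k + 3*(k.choose 2)) + 6*((k+4)*k)) := by
        rw [pow_add, pow_add, pow_add]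
    _ < 2^(30*k^2) := Nat.pow_lt_pow_right (by norm_num) (exp_ineq2 k hk2)

lemma master (hT : IsTournament T) (k : ℕ) (hk : 1 ≤ k) (R : V → V → Prop) (A S : Finset V)
    (hS : 2^(30*k) ≤ S.card)
    (hdeg : ∀ v ∈ S, (A.card : ℝ) ≤ 20 * ((A.filter (fun x => R v x)).card)) :
    (S.card.choose k : ℝ) / 2^(30*k^2) < ((goodF T R k A S).card : ℝ) := by
  classical
  have hm0 : 0 < S.card := lt_of_lt_of_le (by positivity : 0 < 2^(30*k)) hS
  have hm0R : (0:ℝ) < S.card := by exact_mod_cast hm0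
  by_cases hk2 : 2 ≤ k
  · -- main case
    set C := (4:ℝ)^k * 8^(k.choose 2) with hC
    have hC0 : (0:ℝ) < C := by positivity
    have hden : (0:ℝ) < (2:ℝ)^(6*k) - 2^(5*k) := by
      have : (2:ℝ)^(5*k) < 2^(6*k) := by
        apply pow_lt_pow_right₀ (by norm_num)
        omega
      linarith
    set ρ := 2 * (20:ℝ)^k / ((2:ℝ)^(6*k) - 2^(5*k)) with hρ
    have hρ0 : 0 < ρ := by positivity
    -- size hypothesis
    have hsize : (40:ℝ) * 8^k * 40^(k+4) ≤ S.card := by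
      have h1 : ((40:ℕ) * 8^k * 40^(k+4) : ℕ) ≤ S.card := le_trans (nat_size k hk2) hS
      calc (40:ℝ) * 8^k * 40^(k+4) = (((40:ℕ) * 8^k * 40^(k+4) : ℕ) : ℝ) := by push_cast; ring
        _ ≤ S.card := by exact_mod_cast h1
    -- potential hypothesis
    have hρbar : ρ ≤ 4 * (20:ℝ)^k / 2^(6*k) := by
      rw [hρ]
      rw [div_le_div_iff₀ hden (by positivity)]
      have h56 : (2:ℝ)^(5*k) ≤ 2^(6*k) / 2 := by
        rw [le_div_iff₀ (by norm_num : (0:ℝ) < 2)]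
        calc (2:ℝ)^(5*k) * 2 = 2^(5*k+1) := by rw [pow_succ]
          _ ≤ 2^(6*k) := by
            apply pow_le_pow_right₀ (by norm_num)
            omega
      nlinarith [pow_pos (by norm_num : (0:ℝ) < 20) k, pow_pos (by norm_num : (0:ℝ) < 2) (6*k)]
    have hpotC : ρ^(k+4) ≤ C⁻¹ := by
      have h1 : ρ^(k+4) ≤ (4 * (20:ℝ)^k / 2^(6*k))^(k+4) :=
        pow_le_pow_left₀ (le_of_lt hρ0) hρbar (k+4)
      have h2 : ((4 * (20:ℝ)^k / 2^(6*k))^(k+4)) * C ≤ 1 := by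
        have hnat := nat_pot k hk2
        have hnatR : ((4:ℝ) * 20^k)^(k+4) * (4^k * 8^(k.choose 2)) ≤ ((2:ℝ)^(6*k))^(k+4) := by
          exact_mod_cast hnat
        rw [div_pow]
        rw [div_mul_eq_mul_div, div_le_one (by positivity)]
        calc ((4:ℝ) * 20^k)^(k+4) * C = ((4:ℝ) * 20^k)^(k+4) * (4^k * 8^(k.choose 2)) := by
              rw [hC]
          _ ≤ ((2:ℝ)^(6*k))^(k+4) := hnatR
      calc ρ^(k+4) ≤ (4 * (20:ℝ)^k / 2^(6*k))^(k+4) := h1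
        _ ≤ C⁻¹ := by
          rw [← mul_le_mul_iff_of_pos_right hC0, inv_mul_cancel₀ (ne_of_gt hC0)]
          exact h2
    have hWS : ((trS T k S).card : ℝ) ≤ (S.card:ℝ)^k := by
      have h1 : (trS T k S).card ≤ (S.powersetCard k).card :=
        Finset.card_le_card (Finset.filter_subset _ _)
      rw [Finset.card_powersetCard] at h1
      calc ((trS T k S).card : ℝ) ≤ (S.card.choose k : ℝ) := by exact_mod_cast h1
        _ ≤ (S.card:ℝ)^k := by exact_mod_cast Nat.choose_le_pow S.card k
    have hpot : ((trS T k S).card : ℝ) * ρ^(k+4) ≤ C⁻¹ * (S.card:ℝ)^k := by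
      calc ((trS T k S).card : ℝ) * ρ^(k+4) ≤ (S.card:ℝ)^k * C⁻¹ := by
            apply mul_le_mul hWS hpotC (by positivity) (by positivity)
        _ = C⁻¹ * (S.card:ℝ)^k := by ring
    have hres := DES hT k hk2 R A S hdeg (k+4) S (le_refl S) hsize hpot
    -- final comparison
    have hfinnat : (2:ℝ)^(6*k) * C * ((40:ℝ)^(k+4))^k < 2^(30*k^2) := by
      have := nat_fin k hk2
      have hR : (2:ℝ)^(6*k) * ((4:ℝ)^k * 8^(k.choose 2)) * (((40:ℝ))^(k+4))^k < 2^(30*k^2) := by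
        exact_mod_cast this
      rw [hC]
      exact hR
    have h40k : (0:ℝ) < ((40:ℝ)^(k+4))^k := by positivity
    have hgoal : (S.card.choose k : ℝ) / 2^(30*k^2)
        < (C⁻¹ / 2^(6*k)) * ((S.card:ℝ)/40^(k+4))^k := by
      have hchoose : (S.card.choose k : ℝ) ≤ (S.card:ℝ)^k := by
        exact_mod_cast Nat.choose_le_pow S.card k
      have hmk : (0:ℝ) < (S.card:ℝ)^k := by positivity
      have e1 : (C⁻¹ / 2^(6*k)) * ((S.card:ℝ)/40^(k+4))^k
          = (S.card:ℝ)^k / (2^(6*k) * C * ((40:ℝ)^(k+4))^k) := by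
        rw [div_pow]
        field_simp
      rw [e1]
      have hD0 : (0:ℝ) < 2^(6*k) * C * ((40:ℝ)^(k+4))^k := by positivity
      have h2 : (S.card:ℝ)^k / 2^(30*k^2)
          < (S.card:ℝ)^k / (2^(6*k) * C * ((40:ℝ)^(k+4))^k) :=
        div_lt_div_of_pos_left hmk hD0 hfinnat
      have h1 : (S.card.choose k : ℝ) / 2^(30*k^2) ≤ (S.card:ℝ)^k / 2^(30*k^2) := by
        gcongr
      linarith
    linarith [hres, hgoal]
  · -- k = 1
    have hk1 : k = 1 := by omega
    subst hk1
    have hsing : S.card ≤ (goodF T R 1 A S).card := by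
      apply Finset.card_le_card_of_injOn (fun v => {v})
      · intro v hv
        rw [goodF, Finset.mem_coe, Finset.mem_filter, mem_trS]
        refine ⟨⟨Finset.singleton_subset_iff.mpr hv, Finset.card_singleton v, ?_⟩, ?_⟩
        · intro a ha b hb c hc hab hbc
          simp only [Finset.mem_singleton] at ha hb hc
          subst ha; subst hb; subst hc
          exact hab
        · have heq : A.filter (fun x => ∀ u ∈ ({v} : Finset V), R u x)
              = A.filter (fun x => R v x) := by
            apply Finset.filter_congr
            intro x _
            simp
          rw [heq]
          have h1 := hdeg v hv
          have h2 : (0:ℝ) ≤ ((A.filter (fun x => R v x)).card : ℝ) := by positivity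
          have h3 : (2:ℝ)^(6*1) = 64 := by norm_num
          rw [h3]
          linarith
      · intro a _ b _ h
        simpa using h
    have hGd : (S.card : ℝ) ≤ ((goodF T R 1 A S).card : ℝ) := by exact_mod_cast hsing
    have hch : S.card.choose 1 = S.card := Nat.choose_one_right _
    rw [hch]
    have h230 : (1:ℝ) < 2^(30*1^2) := by norm_num
    calc (S.card : ℝ) / 2^(30*1^2) < (S.card : ℝ) / 1 := by
          apply div_lt_div_of_pos_left hm0R (by norm_num) h230
      _ = (S.card : ℝ) := div_one _
      _ ≤ _ := hGd

lemma setOf_filter_eq (A : Finset V) (p : V → Prop) :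
    {a : V | a ∈ A ∧ p a}.ncard = (A.filter p).card := by
  classical
  have h : {a : V | a ∈ A ∧ p a} = ↑(A.filter p) := by
    ext a
    simp [Finset.mem_filter]
  rw [h, Set.ncard_coe_finset]

lemma good_iff (T R : V → V → Prop) (k : ℕ) (A S H : Finset V) :
    H ∈ goodF T R k A S ↔ H ⊆ S ∧ H.card = k ∧ TransOn T H ∧
      (A.card : ℝ)/2^(6*k) ≤ ((A.filter (fun x => ∀ v ∈ H, R v x)).card : ℝ) := by
  rw [goodF, Finset.mem_filter, mem_trS]
  have hp : (0:ℝ) < 2^(6*k) := by positivity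
  constructor
  · rintro ⟨⟨h1, h2, h3⟩, h4⟩
    refine ⟨h1, h2, h3, ?_⟩
    rw [div_le_iff₀ hp]
    linarith
  · rintro ⟨h1, h2, h3, h4⟩
    refine ⟨⟨h1, h2, h3⟩, ?_⟩
    rw [div_le_iff₀ hp] at h4
    linarith

end HeadTail

open HeadTail

/-- if `|S| ≥ 2^{30k}` and every `v ∈ S` has `d⁺_A(v) ≥ |A|/20` (resp.
`d⁻_A(v) ≥ |A|/20`), then `S` contains an `A`-head (resp. `A`-tail) of size `k`, and more
than a `1/2^{30k²}` fraction of the `k`-element subsets of `S` are `A`-heads (resp.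
`A`-tails). -/
theorem head_tail_in_dense_sets {V : Type*} [DecidableEq V] (T : V → V → Prop)
    (hT : IsTournament T) (k : ℕ) (hk : 1 ≤ k) (A S : Finset V)
    (hS : 2 ^ (30 * k) ≤ S.card) :
    ((∀ v ∈ S, (A.card : ℝ) / 20 ≤ ({a : V | a ∈ A ∧ T v a}.ncard : ℝ)) →
      (∃ H ⊆ S, IsHead T A k H) ∧
      (S.card.choose k : ℝ) / 2 ^ (30 * k ^ 2) <
        ({H : Finset V | H ⊆ S ∧ IsHead T A k H}.ncard : ℝ)) ∧
    ((∀ v ∈ S, (A.card : ℝ) / 20 ≤ ({a : V | a ∈ A ∧ T a v}.ncard : ℝ)) →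
      (∃ H ⊆ S, IsTail T A k H) ∧
      (S.card.choose k : ℝ) / 2 ^ (30 * k ^ 2) <
        ({H : Finset V | H ⊆ S ∧ IsTail T A k H}.ncard : ℝ)) := by
  classical
  constructor
  · intro hdegS
    have hdeg : ∀ v ∈ S, (A.card : ℝ) ≤ 20 * ((A.filter (fun x => T v x)).card) := by
      intro v hv
      have h1 := hdegS v hv
      rw [setOf_filter_eq A (fun a => T v a)] at h1
      rw [div_le_iff₀ (by norm_num : (0:ℝ) < 20)] at h1
      linarith
    have hmain := master hT k hk T A S hS hdeg
    have hsets : {H : Finset V | H ⊆ S ∧ IsHead T A k H} = ↑(goodF T T k A S) := by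
      ext H
      simp only [Set.mem_setOf_eq, Finset.mem_coe, good_iff, IsHead]
      rw [setOf_filter_eq A (fun a => ∀ s ∈ H, T s a)]
      constructor
      · rintro ⟨h1, h2, h3, h4⟩
        refine ⟨h1, h2, h3, ?_⟩
        convert h4 using 2
        congr!
      · rintro ⟨h1, h2, h3, h4⟩
        refine ⟨h1, h2, h3, ?_⟩
        convert h4 using 2
        congr!
    have hncard : {H : Finset V | H ⊆ S ∧ IsHead T A k H}.ncard
        = (goodF T T k A S).card := by
      rw [hsets, Set.ncard_coe_finset]
    constructor
    · have hpos : 0 < (goodF T T k A S).card := by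
        by_contra h0
        push_neg at h0
        have h00 : (goodF T T k A S).card = 0 := by omega
        rw [h00] at hmain
        have : (0:ℝ) ≤ (S.card.choose k : ℝ) / 2 ^ (30 * k ^ 2) := by positivity
        norm_num at hmain
        linarith
      obtain ⟨H, hH⟩ := Finset.card_pos.mp hpos
      have hmem : H ∈ {H : Finset V | H ⊆ S ∧ IsHead T A k H} := by
        rw [hsets]
        exact_mod_cast hH
      exact ⟨H, hmem.1, hmem.2⟩
    · rw [hncard]
      exact hmain
  · intro hdegS
    have hdeg : ∀ v ∈ S, (A.card : ℝ) ≤ 20 * ((A.filter (fun x => T x v)).card) := by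
      intro v hv
      have h1 := hdegS v hv
      rw [setOf_filter_eq A (fun a => T a v)] at h1
      rw [div_le_iff₀ (by norm_num : (0:ℝ) < 20)] at h1
      linarith
    have hmain := master hT k hk (fun u v => T v u) A S hS hdeg
    have hsets : {H : Finset V | H ⊆ S ∧ IsTail T A k H} = ↑(goodF T (fun u v => T v u) k A S) := by
      ext H
      simp only [Set.mem_setOf_eq, Finset.mem_coe, good_iff, IsTail]
      rw [setOf_filter_eq A (fun a => ∀ s ∈ H, T a s)]
      constructor
      · rintro ⟨h1, h2, h3, h4⟩
        refine ⟨h1, h2, h3, ?_⟩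
        convert h4 using 2
        congr!
      · rintro ⟨h1, h2, h3, h4⟩
        refine ⟨h1, h2, h3, ?_⟩
        convert h4 using 2
        congr!
    have hncard : {H : Finset V | H ⊆ S ∧ IsTail T A k H}.ncard
        = (goodF T (fun u v => T v u) k A S).card := by
      rw [hsets, Set.ncard_coe_finset]
    constructor
    · have hpos : 0 < (goodF T (fun u v => T v u) k A S).card := by
        by_contra h0
        push_neg at h0
        have h00 : (goodF T (fun u v => T v u) k A S).card = 0 := by omega
        rw [h00] at hmain
        have : (0:ℝ) ≤ (S.card.choose k : ℝ) / 2 ^ (30 * k ^ 2) := by positivity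
        norm_num at hmain
        linarith
      obtain ⟨H, hH⟩ := Finset.card_pos.mp hpos
      have hmem : H ∈ {H : Finset V | H ⊆ S ∧ IsTail T A k H} := by
        rw [hsets]
        exact_mod_cast hH
      exact ⟨H, hmem.1, hmem.2⟩
    · rw [hncard]
      exact hmain
end

section
/- Let T be a tournament whose vertex set is partitioned into nonempty sets X and Y, and let δ be such that e⃗(X,Y) = δ|X||Y|. For x ∈ X define Y(x) = { v ∈ N⁺_Y(x) : |N⁻_X(v) ∩ N⁻_X(x)| ≥ δ|X|/8 }, and for y ∈ Y define X(y) = { u ∈ N⁻_X(y) : |N⁺_Y(u) ∩ N⁺_Y(y)| ≥ δ|Y|/8 }. If δ|X| > 2^{10} and δ|Y| > 2^{10}, then there exist vertices x ∈ X and y ∈ Y such that |X(y)| ≥ (δ/8)|X| and |Y(x)| ≥ (δ/8)|Y|. -/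
open Finset

lemma tourn_pairs {V : Type*} [DecidableEq V] {T : V → V → Prop} [DecidableRel T]
    (hT : IsTournament T) (s : Finset V) :
    2 * ∑ x ∈ s, (s.filter fun u => T u x).card = s.card * s.card - s.card := by
  have hsum : ∑ x ∈ s, (s.filter fun u => T u x).card
      = ((s ×ˢ s).filter fun p => T p.1 p.2).card := by
    rw [Finset.card_filter, Finset.sum_product, Finset.sum_comm]
    simp only [Finset.card_filter]
  have hcard : ((s ×ˢ s).filter fun p => T p.1 p.2).card
      = ((s ×ˢ s).filter fun p => T p.2 p.1).card := by
    apply Finset.card_bij (fun p _ => (p.2, p.1))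
    · intro p hp
      simp only [Finset.mem_filter, Finset.mem_product] at hp ⊢
      exact ⟨⟨hp.1.2, hp.1.1⟩, hp.2⟩
    · intro p hp q hq h
      have h1 := congrArg Prod.fst h
      have h2 := congrArg Prod.snd h
      simp only at h1 h2
      exact Prod.ext h2 h1
    · intro q hq
      simp only [Finset.mem_filter, Finset.mem_product] at hq
      exact ⟨(q.2, q.1), by
        simp only [Finset.mem_filter, Finset.mem_product]
        exact ⟨⟨hq.1.2, hq.1.1⟩, hq.2⟩, rfl⟩
  have hdisj : Disjoint ((s ×ˢ s).filter fun p => T p.1 p.2)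
      ((s ×ˢ s).filter fun p => T p.2 p.1) := by
    rw [Finset.disjoint_left]
    intro p hp hq
    simp only [Finset.mem_filter] at hp hq
    rcases eq_or_ne p.1 p.2 with h | h
    · exact hT.1 p.2 (h ▸ hp.2)
    · exact (hT.2 _ _ h).mp hp.2 hq.2
  have hunion : ((s ×ˢ s).filter fun p => T p.1 p.2) ∪ ((s ×ˢ s).filter fun p => T p.2 p.1)
      = s.offDiag := by
    ext p
    simp only [Finset.mem_union, Finset.mem_filter, Finset.mem_product, Finset.mem_offDiag]
    constructor
    · rintro (⟨⟨h1, h2⟩, h3⟩ | ⟨⟨h1, h2⟩, h3⟩)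
      · exact ⟨h1, h2, fun e => hT.1 p.2 (e ▸ h3)⟩
      · refine ⟨h1, h2, fun e => hT.1 p.1 ?_⟩
        rw [← e] at h3; exact h3
    · rintro ⟨h1, h2, h3⟩
      by_cases ht : T p.1 p.2
      · exact Or.inl ⟨⟨h1, h2⟩, ht⟩
      · exact Or.inr ⟨⟨h1, h2⟩, (hT.2 p.2 p.1 (Ne.symm h3)).mpr ht⟩
  rw [hsum]
  have h2 : ((s ×ˢ s).filter fun p => T p.1 p.2).card
      + ((s ×ˢ s).filter fun p => T p.2 p.1).card = s.card * s.card - s.card := by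
    rw [← Finset.card_union_of_disjoint hdisj, hunion, Finset.offDiag_card]
  omega

lemma main_lemma {V : Type*} [DecidableEq V]
    (T : V → V → Prop) [DecidableRel T] (hT : IsTournament T)
    (A B : Finset V) (δ : ℝ)
    (hδ : (eDir T A B : ℝ) = δ * A.card * B.card)
    (hδA : 2 < δ * A.card) :
    ∃ x ∈ A, δ / 8 * B.card ≤
      ((B.filter fun v => T x v ∧
        δ * A.card / 8 ≤ ((A.filter fun u => T u v ∧ T u x).card : ℝ)).card : ℝ) := by
  have hAne : A.Nonempty := by
    rw [Finset.nonempty_iff_ne_empty]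
    intro h
    rw [h] at hδA
    simp at hδA
    linarith
  have hA0 : (0:ℝ) < A.card := by exact_mod_cast Finset.card_pos.mpr hAne
  have hδ0 : 0 < δ := by nlinarith
  have hθ0 : (0:ℝ) < δ * A.card / 8 := by nlinarith
  -- sum of in-degrees equals eDir
  have hE : (eDir T A B : ℝ) = ∑ v ∈ B, ((A.filter fun u => T u v).card : ℝ) := by
    have h : eDir T A B = ∑ v ∈ B, (A.filter fun u => T u v).card := by
      unfold eDir
      rw [Finset.card_filter, Finset.sum_product, Finset.sum_comm]
      simp only [Finset.card_filter]
    rw [h, Nat.cast_sum]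
  -- the per-vertex inequality
  have hgv : ∀ v : V,
      (((A.filter fun u => T u v).card : ℝ) - 1) / 2 - δ * A.card / 8
        ≤ ((A.filter fun x => T x v ∧
            δ * A.card / 8 ≤ ((A.filter fun u => T u v ∧ T u x).card : ℝ)).card : ℝ) := by
    intro v
    set s := A.filter fun x => T x v with hs
    have hpair := tourn_pairs hT s
    have hinner : ∀ x : V, s.filter (fun u => T u x) = A.filter fun u => T u v ∧ T u x :=
      fun x => by rw [hs, Finset.filter_filter]
    simp only [hinner] at hpair
    have hg : (A.filter fun x => T x v ∧
        δ * A.card / 8 ≤ ((A.filter fun u => T u v ∧ T u x).card : ℝ)).card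
        = (s.filter fun x =>
            δ * A.card / 8 ≤ ((A.filter fun u => T u v ∧ T u x).card : ℝ)).card := by
      rw [hs, Finset.filter_filter]
    rw [hg]
    have hle : s.card ≤ s.card * s.card := by
      rcases Nat.eq_zero_or_pos s.card with h | h
      · simp [h]
      · exact Nat.le_mul_of_pos_left _ h
    have hsumr : (2:ℝ) * ∑ x ∈ s, ((A.filter fun u => T u v ∧ T u x).card : ℝ)
        = (s.card : ℝ) * s.card - s.card := by
      have h1 := congrArg (fun n : ℕ => (n : ℝ)) hpair
      simp only [Nat.cast_mul, Nat.cast_ofNat, Nat.cast_sum, Nat.cast_sub hle] at h1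
      exact h1
    have hsplit := Finset.sum_filter_add_sum_filter_not s
      (fun x => δ * A.card / 8 ≤ ((A.filter fun u => T u v ∧ T u x).card : ℝ))
      (fun x => ((A.filter fun u => T u v ∧ T u x).card : ℝ))
    have hb1 : ∑ x ∈ s.filter (fun x =>
          δ * A.card / 8 ≤ ((A.filter fun u => T u v ∧ T u x).card : ℝ)),
          ((A.filter fun u => T u v ∧ T u x).card : ℝ)
        ≤ ((s.filter fun x =>
          δ * A.card / 8 ≤ ((A.filter fun u => T u v ∧ T u x).card : ℝ)).card : ℝ)
          * s.card := by
      calc ∑ x ∈ s.filter (fun x =>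
            δ * A.card / 8 ≤ ((A.filter fun u => T u v ∧ T u x).card : ℝ)),
            ((A.filter fun u => T u v ∧ T u x).card : ℝ)
          ≤ ∑ _x ∈ s.filter (fun x =>
            δ * A.card / 8 ≤ ((A.filter fun u => T u v ∧ T u x).card : ℝ)), (s.card : ℝ) := by
            apply Finset.sum_le_sum
            intro x _
            have hsub : (A.filter fun u => T u v ∧ T u x) ⊆ s := by
              rw [hs]
              intro u hu
              simp only [Finset.mem_filter] at hu ⊢
              exact ⟨hu.1, hu.2.1⟩
            exact_mod_cast Finset.card_le_card hsub
        _ = _ := by rw [Finset.sum_const, nsmul_eq_mul]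
    have hb2 : ∑ x ∈ s.filter (fun x =>
          ¬ (δ * A.card / 8 ≤ ((A.filter fun u => T u v ∧ T u x).card : ℝ))),
          ((A.filter fun u => T u v ∧ T u x).card : ℝ)
        ≤ (s.card : ℝ) * (δ * A.card / 8) := by
      calc ∑ x ∈ s.filter (fun x =>
            ¬ (δ * A.card / 8 ≤ ((A.filter fun u => T u v ∧ T u x).card : ℝ))),
            ((A.filter fun u => T u v ∧ T u x).card : ℝ)
          ≤ ∑ _x ∈ s.filter (fun x =>
            ¬ (δ * A.card / 8 ≤ ((A.filter fun u => T u v ∧ T u x).card : ℝ))),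
            (δ * A.card / 8) := by
            apply Finset.sum_le_sum
            intro x hx
            simp only [Finset.mem_filter] at hx
            exact le_of_not_ge hx.2
        _ = ((s.filter fun x =>
            ¬ (δ * A.card / 8 ≤ ((A.filter fun u => T u v ∧ T u x).card : ℝ))).card : ℝ)
            * (δ * A.card / 8) := by rw [Finset.sum_const, nsmul_eq_mul]
        _ ≤ (s.card : ℝ) * (δ * A.card / 8) := by
            have hcf : ((s.filter fun x =>
                ¬ (δ * A.card / 8 ≤ ((A.filter fun u => T u v ∧ T u x).card : ℝ))).card : ℝ)
                ≤ (s.card : ℝ) := by exact_mod_cast Finset.card_filter_le _ _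
            nlinarith
    have hds : (A.filter fun u => T u v).card = s.card := by rw [hs]
    rw [hds]
    rcases Nat.eq_zero_or_pos s.card with h0 | h0
    · rw [h0]
      have hnn : (0:ℝ) ≤ ((s.filter fun x =>
          δ * A.card / 8 ≤ ((A.filter fun u => T u v ∧ T u x).card : ℝ)).card : ℝ) :=
        Nat.cast_nonneg _
      push_cast
      linarith
    · have h1 : (1:ℝ) ≤ (s.card : ℝ) := by exact_mod_cast h0
      nlinarith [hsumr, hsplit, hb1, hb2]
  -- sum the per-vertex inequality over B
  have hgsum : δ * A.card * B.card / 2 - B.card / 2 - B.card * (δ * A.card / 8)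
      ≤ ∑ v ∈ B, ((A.filter fun x => T x v ∧
          δ * A.card / 8 ≤ ((A.filter fun u => T u v ∧ T u x).card : ℝ)).card : ℝ) := by
    have h1 := Finset.sum_le_sum (fun v (_ : v ∈ B) => hgv v)
    have h2 : ∑ v ∈ B, ((A.filter fun u => T u v).card : ℝ) = δ * A.card * B.card := by
      rw [← hE, hδ]
    have h3 : ∑ v ∈ B, ((((A.filter fun u => T u v).card : ℝ) - 1) / 2 - δ * A.card / 8)
        = (∑ v ∈ B, ((A.filter fun u => T u v).card : ℝ)) / 2 - B.card / 2
          - B.card * (δ * A.card / 8) := by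
      simp only [sub_div]
      rw [Finset.sum_sub_distrib, Finset.sum_sub_distrib, Finset.sum_const, Finset.sum_const,
        nsmul_eq_mul, nsmul_eq_mul, ← Finset.sum_div]
      ring
    calc δ * A.card * B.card / 2 - B.card / 2 - B.card * (δ * A.card / 8)
        = ∑ v ∈ B, ((((A.filter fun u => T u v).card : ℝ) - 1) / 2 - δ * A.card / 8) := by
          rw [h3, h2]
      _ ≤ _ := h1
  -- double counting
  have hdc : ∑ v ∈ B, ((A.filter fun x => T x v ∧
        δ * A.card / 8 ≤ ((A.filter fun u => T u v ∧ T u x).card : ℝ)).card : ℝ)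
      = ∑ x ∈ A, ((B.filter fun v => T x v ∧
        δ * A.card / 8 ≤ ((A.filter fun u => T u v ∧ T u x).card : ℝ)).card : ℝ) := by
    have h : ∑ v ∈ B, (A.filter fun x => T x v ∧
          δ * A.card / 8 ≤ ((A.filter fun u => T u v ∧ T u x).card : ℝ)).card
        = ∑ x ∈ A, (B.filter fun v => T x v ∧
          δ * A.card / 8 ≤ ((A.filter fun u => T u v ∧ T u x).card : ℝ)).card := by
      simp only [Finset.card_filter]
      exact Finset.sum_comm
    exact_mod_cast h
  have hB0 : (0:ℝ) ≤ B.card := Nat.cast_nonneg _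
  have hkey : ∑ _x ∈ A, (δ / 8 * B.card) ≤ ∑ x ∈ A, ((B.filter fun v => T x v ∧
      δ * A.card / 8 ≤ ((A.filter fun u => T u v ∧ T u x).card : ℝ)).card : ℝ) := by
    rw [← hdc, Finset.sum_const, nsmul_eq_mul]
    nlinarith [hgsum]
  obtain ⟨x, hx, hxle⟩ := Finset.exists_le_of_sum_le hAne hkey
  exact ⟨x, hx, hxle⟩

lemma ncard_mem_filter {V : Type*} (s : Finset V) (p : V → Prop) [DecidablePred p] :
    {a : V | a ∈ s ∧ p a}.ncard = (s.filter p).card := by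
  rw [← Set.ncard_coe_finset]
  congr 1
  ext a
  simp

/-- counting lemma: if `e⃗(X,Y) = δ|X||Y|` and `δ|X|, δ|Y| > 2^{10}`, then
there are `x ∈ X` and `y ∈ Y` with `|X(y)| ≥ (δ/8)|X|` and `|Y(x)| ≥ (δ/8)|Y|`, where
`Y(x) = {v ∈ N⁺_Y(x) : |N⁻_X(v) ∩ N⁻_X(x)| ≥ δ|X|/8}` and
`X(y) = {u ∈ N⁻_X(y) : |N⁺_Y(u) ∩ N⁺_Y(y)| ≥ δ|Y|/8}`. -/
theorem counting_lemma {V : Type*} [Fintype V] [DecidableEq V]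
    (T : V → V → Prop) [DecidableRel T] (hT : IsTournament T)
    (X Y : Finset V) (hdisj : Disjoint X Y) (hunion : X ∪ Y = Finset.univ)
    (hX : X.Nonempty) (hY : Y.Nonempty) (δ : ℝ)
    (hδ : (eDir T X Y : ℝ) = δ * X.card * Y.card)
    (hδX : 2 ^ 10 < δ * X.card) (hδY : 2 ^ 10 < δ * Y.card) :
    ∃ x ∈ X, ∃ y ∈ Y,
      δ / 8 * X.card ≤
        ({u : V | u ∈ X ∧ T u y ∧
          δ * Y.card / 8 ≤ ({w : V | w ∈ Y ∧ T u w ∧ T y w}.ncard : ℝ)}.ncard : ℝ) ∧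
      δ / 8 * Y.card ≤
        ({v : V | v ∈ Y ∧ T x v ∧
          δ * X.card / 8 ≤ ({w : V | w ∈ X ∧ T w v ∧ T w x}.ncard : ℝ)}.ncard : ℝ) := by
  have h1024 : (2:ℝ) ^ 10 = 1024 := by norm_num
  -- first application: direction X → Y
  obtain ⟨x, hxX, hx⟩ := main_lemma T hT X Y δ hδ (by rw [h1024] at hδX; linarith)
  -- second application: reversed tournament, direction Y → X
  have hT' : IsTournament (fun a b => T b a) :=
    ⟨hT.1, fun u v huv => hT.2 v u (Ne.symm huv)⟩
  have he : ((@eDir V (fun a b => T b a)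
      (fun a b => inferInstanceAs (Decidable (T b a))) Y X : ℕ) : ℝ)
      = δ * Y.card * X.card := by
    have h : @eDir V (fun a b => T b a)
        (fun a b => inferInstanceAs (Decidable (T b a))) Y X = eDir T X Y := by
      unfold eDir
      rw [Finset.card_filter, Finset.card_filter, Finset.sum_product, Finset.sum_product,
        Finset.sum_comm]
    rw [h, hδ]; ring
  obtain ⟨y, hyY, hy⟩ := @main_lemma V _ (fun a b => T b a)
    (fun a b => inferInstanceAs (Decidable (T b a))) hT' Y X δ he
    (by rw [h1024] at hδY; linarith)
  refine ⟨x, hxX, y, hyY, ?_, ?_⟩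
  · have e2 : {u : V | u ∈ X ∧ T u y ∧
        δ * Y.card / 8 ≤ ({w : V | w ∈ Y ∧ T u w ∧ T y w}.ncard : ℝ)}.ncard
        = (X.filter fun u => T u y ∧
            δ * Y.card / 8 ≤ ((Y.filter fun w => T u w ∧ T y w).card : ℝ)).card := by
      rw [show {u : V | u ∈ X ∧ T u y ∧
          δ * Y.card / 8 ≤ ({w : V | w ∈ Y ∧ T u w ∧ T y w}.ncard : ℝ)}
          = {u : V | u ∈ X ∧ (T u y ∧
            δ * Y.card / 8 ≤ ((Y.filter fun w => T u w ∧ T y w).card : ℝ))} from by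
        ext u
        simp only [Set.mem_setOf_eq, ncard_mem_filter]]
      rw [ncard_mem_filter]
    rw [e2]
    exact hy
  · have e2 : {v : V | v ∈ Y ∧ T x v ∧
        δ * X.card / 8 ≤ ({w : V | w ∈ X ∧ T w v ∧ T w x}.ncard : ℝ)}.ncard
        = (Y.filter fun v => T x v ∧
            δ * X.card / 8 ≤ ((X.filter fun w => T w v ∧ T w x).card : ℝ)).card := by
      rw [show {v : V | v ∈ Y ∧ T x v ∧
          δ * X.card / 8 ≤ ({w : V | w ∈ X ∧ T w v ∧ T w x}.ncard : ℝ)}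
          = {v : V | v ∈ Y ∧ (T x v ∧
            δ * X.card / 8 ≤ ((X.filter fun w => T w v ∧ T w x).card : ℝ))} from by
        ext v
        simp only [Set.mem_setOf_eq, ncard_mem_filter]]
      rw [ncard_mem_filter]
    rw [e2]
    exact hx
end

section
/- Let T be a tournament on n vertices with minimum semidegree δ⁰(T) ≥ n/4, and let (A',B') be a partition of V(T) with ||A'| − |B'|| ≤ 1. Let 0 < δ ≤ 1 be such that e⃗(A',B') = δn²/4, and assume δ^{1/4}·n ≥ 1. Then there exist A ⊆ A' and B ⊆ B' such that |V(T) \ (A ∪ B)| ≤ 12·δ^{1/4}·n, every vertex of A has both out-degree and in-degree in the subtournament T[A] at least |A|/2 − 10·δ^{1/4}·n, and every vertex of B has both out-degree and in-degree in T[B] at least |B|/2 − 10·δ^{1/4}·n. -/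
lemma sum_out_eq {V : Type*} [DecidableEq V] (T : V → V → Prop) [DecidableRel T]
    (X Y : Finset V) :
    ∑ x ∈ X, (Y.filter fun y => T x y).card = eDir T X Y := by
  unfold eDir
  rw [Finset.card_filter, Finset.sum_product]
  exact Finset.sum_congr rfl fun x _ => (Finset.card_filter _ _)

lemma sum_in_eq {V : Type*} [DecidableEq V] (T : V → V → Prop) [DecidableRel T]
    (X Y : Finset V) :
    ∑ y ∈ Y, (X.filter fun x => T x y).card = eDir T X Y := by
  unfold eDir
  rw [Finset.card_filter, Finset.sum_product_right]
  exact Finset.sum_congr rfl fun y _ => (Finset.card_filter _ _)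

open scoped Classical in
lemma card_filter_le_of_sum_le {V : Type*} {S : Finset V} {h : V → ℝ}
    (h0 : ∀ v ∈ S, 0 ≤ h v) {t M : ℝ} (ht : 0 < t)
    (hM : ∑ v ∈ S, h v ≤ M) :
    ((S.filter fun v => t < h v).card : ℝ) ≤ M / t := by
  rw [le_div_iff₀ ht]
  calc ((S.filter fun v => t < h v).card : ℝ) * t
      = ∑ _v ∈ S.filter fun v => t < h v, t := by rw [Finset.sum_const, nsmul_eq_mul]
    _ ≤ ∑ v ∈ S.filter (fun v => t < h v), h v :=
        Finset.sum_le_sum (fun v hv => (Finset.mem_filter.mp hv).2.le)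
    _ ≤ ∑ v ∈ S, h v :=
        Finset.sum_le_sum_of_subset_of_nonneg (Finset.filter_subset _ _) (fun v hv _ => h0 v hv)
    _ ≤ M := hM

/-- pair identity: for `v ∈ X`, out-degree + in-degree within `X` is `|X| - 1`. -/
lemma pair_identity {V : Type*} [DecidableEq V] {T : V → V → Prop} [DecidableRel T]
    (hT : IsTournament T) {X : Finset V} {v : V} (hv : v ∈ X) :
    (X.filter fun u => T v u).card + (X.filter fun u => T u v).card + 1 = X.card := by
  have hdisj : Disjoint (X.filter fun u => T v u) (X.filter fun u => T u v) := by
    rw [Finset.disjoint_left]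
    intro u hu1 hu2
    have h1 := (Finset.mem_filter.mp hu1).2
    have h2 := (Finset.mem_filter.mp hu2).2
    rcases eq_or_ne u v with rfl | hne
    · exact hT.1 u h1
    · exact ((hT.2 v u hne.symm).mp h1) h2
  have hun : (X.filter fun u => T v u) ∪ (X.filter fun u => T u v) = X.erase v := by
    rw [← Finset.filter_or]
    ext u
    simp only [Finset.mem_filter, Finset.mem_erase]
    constructor
    · rintro ⟨hu, h | h⟩
      · refine ⟨fun h' => ?_, hu⟩; exact hT.1 v (h' ▸ h)
      · refine ⟨fun h' => ?_, hu⟩; exact hT.1 v (h' ▸ h)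
    · rintro ⟨hne, hu⟩
      refine ⟨hu, ?_⟩
      by_cases h : T v u
      · exact Or.inl h
      · exact Or.inr ((hT.2 u v hne).mpr h)
  calc (X.filter fun u => T v u).card + (X.filter fun u => T u v).card + 1
      = ((X.filter fun u => T v u) ∪ (X.filter fun u => T u v)).card + 1 := by
        rw [Finset.card_union_of_disjoint hdisj]
    _ = (X.erase v).card + 1 := by rw [hun]
    _ = X.card := Finset.card_erase_add_one hv

lemma filter_card_sub {V : Type*} [DecidableEq V] {A A' : Finset V} (hsub : A ⊆ A')
    (p : V → Prop) [DecidablePred p] :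
    (A'.filter p).card ≤ (A.filter p).card + (A' \ A).card := by
  have h1 : A'.filter p ⊆ A.filter p ∪ (A' \ A) := by
    intro u hu
    have hu' := Finset.mem_filter.mp hu
    by_cases hA : u ∈ A
    · exact Finset.mem_union_left _ (Finset.mem_filter.mpr ⟨hA, hu'.2⟩)
    · exact Finset.mem_union_right _ (Finset.mem_sdiff.mpr ⟨hu'.1, hA⟩)
  exact le_trans (Finset.card_le_card h1) (Finset.card_union_le _ _)

open scoped Classical in
lemma side_lemma {V : Type*} [Fintype V] [DecidableEq V]
    (T : V → V → Prop) [DecidableRel T] (hT : IsTournament T)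
    (A' B' : Finset V) (hdisj : Disjoint A' B') (hunion : A' ∪ B' = Finset.univ)
    {n t E : ℝ} (hn : n = Fintype.card V) (ht : 0 < t) (hE : 0 ≤ E)
    (hout : ∀ v, n / 4 ≤ (outDeg T v : ℝ))
    (hcardA : (A'.card : ℝ) ≤ (n + 1) / 2)
    (heE : (eDir T A' B' : ℝ) ≤ E) :
    ∃ A ⊆ A', ((A' \ A).card : ℝ) ≤ 2 * E / t ∧
      ∀ v ∈ A,
        n / 4 - t - 2 * E / t ≤ ((A.filter fun u => T v u).card : ℝ) ∧
        (A'.card : ℝ) - 1 - n / 4 - t - 2 * E / t ≤ ((A.filter fun u => T u v).card : ℝ) := by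
  set f : V → ℕ := fun v => (B'.filter fun u => T v u).card with hf
  -- degree split over univ = A' ∪ B'
  have hsplit : ∀ v, (outDeg T v) = (A'.filter fun u => T v u).card + f v := by
    intro v
    have : (Finset.univ.filter fun u => T v u)
        = (A'.filter fun u => T v u) ∪ (B'.filter fun u => T v u) := by
      rw [← Finset.filter_union, hunion]
    rw [outDeg, this, Finset.card_union_of_disjoint
      (Finset.disjoint_filter_filter hdisj)]
  -- sum of f over A'
  have hsumf : ∑ v ∈ A', (f v : ℝ) = (eDir T A' B' : ℝ) := by
    rw [← sum_out_eq T A' B']; push_cast; rfl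
  -- sum of out-degrees within A'
  have hsumoutA : ∑ v ∈ A', ((A'.filter fun u => T v u).card : ℝ) = (eDir T A' A' : ℝ) := by
    rw [← sum_out_eq T A' A']; push_cast; rfl
  have hsuminA : ∑ v ∈ A', ((A'.filter fun u => T u v).card : ℝ) = (eDir T A' A' : ℝ) := by
    rw [← sum_in_eq T A' A']; push_cast; rfl
  -- 2 * eDir A' A' + card = card^2
  have h2e : 2 * (eDir T A' A' : ℝ) + (A'.card : ℝ) = (A'.card : ℝ) * (A'.card : ℝ) := by
    have : ∑ v ∈ A', (((A'.filter fun u => T v u).card : ℝ)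
        + ((A'.filter fun u => T u v).card : ℝ) + 1) = ∑ _v ∈ A', ((A'.card : ℝ)) := by
      refine Finset.sum_congr rfl fun v hv => ?_
      have := pair_identity hT hv
      push_cast [← this]; ring
    rw [Finset.sum_add_distrib, Finset.sum_add_distrib, hsumoutA, hsuminA,
      Finset.sum_const, Finset.sum_const, nsmul_eq_mul, nsmul_eq_mul] at this
    push_cast at this ⊢
    linarith
  -- sum of (outdeg - n/4) over A' is at most E
  have hsumg : ∑ v ∈ A', ((outDeg T v : ℝ) - n / 4) ≤ E := by
    have h1 : ∑ v ∈ A', (outDeg T v : ℝ)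
        = (eDir T A' A' : ℝ) + (eDir T A' B' : ℝ) := by
      rw [← hsumoutA, ← hsumf, ← Finset.sum_add_distrib]
      refine Finset.sum_congr rfl fun v _ => ?_
      rw [hsplit v]; push_cast; ring
    rw [Finset.sum_sub_distrib, h1, Finset.sum_const, nsmul_eq_mul]
    have hc0 : (0:ℝ) ≤ (A'.card : ℝ) := Nat.cast_nonneg _
    nlinarith [heE, h2e]
  -- bad sets
  set bad1 := A'.filter (fun v => t < (f v : ℝ)) with hbad1
  set bad2 := A'.filter (fun v => t < (outDeg T v : ℝ) - n / 4) with hbad2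
  have hcb1 : ((bad1.card : ℝ)) ≤ E / t := by
    refine card_filter_le_of_sum_le (fun v _ => by positivity) ht ?_
    rw [hsumf]; exact heE
  have hcb2 : ((bad2.card : ℝ)) ≤ E / t := by
    refine card_filter_le_of_sum_le (fun v _ => by linarith [hout v]) ht hsumg
  refine ⟨A' \ (bad1 ∪ bad2), Finset.sdiff_subset, ?_, ?_⟩
  · have hsub : A' \ (A' \ (bad1 ∪ bad2)) ⊆ bad1 ∪ bad2 := by
      intro u hu
      simp only [Finset.mem_sdiff, not_and, not_not] at hu
      exact hu.2 hu.1
    calc ((A' \ (A' \ (bad1 ∪ bad2))).card : ℝ) ≤ ((bad1 ∪ bad2).card : ℝ) := by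
          exact_mod_cast Finset.card_le_card hsub
      _ ≤ (bad1.card : ℝ) + (bad2.card : ℝ) := by exact_mod_cast Finset.card_union_le _ _
      _ ≤ 2 * E / t := by rw [mul_div_assoc]; linarith
  · intro v hv
    set A := A' \ (bad1 ∪ bad2) with hA
    have hvA' : v ∈ A' := (Finset.mem_sdiff.mp hv).1
    have hvnb : v ∉ bad1 ∪ bad2 := (Finset.mem_sdiff.mp hv).2
    have hfv : (f v : ℝ) ≤ t := by
      by_contra h
      exact hvnb (Finset.mem_union_left _ (Finset.mem_filter.mpr ⟨hvA', lt_of_not_ge h⟩))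
    have hov : (outDeg T v : ℝ) ≤ n / 4 + t := by
      by_contra h
      exact hvnb (Finset.mem_union_right _
        (Finset.mem_filter.mpr ⟨hvA', by linarith [lt_of_not_ge h]⟩))
    have hd : ((A' \ A).card : ℝ) ≤ 2 * E / t := by
      calc ((A' \ A).card : ℝ) ≤ ((bad1 ∪ bad2).card : ℝ) := by
            refine Nat.cast_le.mpr (Finset.card_le_card ?_)
            intro u hu
            simp only [hA, Finset.mem_sdiff, not_and, not_not] at hu
            exact hu.2 hu.1
        _ ≤ (bad1.card : ℝ) + (bad2.card : ℝ) := by exact_mod_cast Finset.card_union_le _ _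
        _ ≤ 2 * E / t := by rw [mul_div_assoc]; linarith
    have houtA' : ((A'.filter fun u => T v u).card : ℝ) = (outDeg T v : ℝ) - (f v : ℝ) := by
      rw [hsplit v]; push_cast; ring
    have hsub1 := filter_card_sub (Finset.sdiff_subset : A ⊆ A') (fun u => T v u)
    have hsub2 := filter_card_sub (Finset.sdiff_subset : A ⊆ A') (fun u => T u v)
    have hpi := pair_identity hT hvA'
    constructor
    · have : (n/4 : ℝ) - t ≤ ((A'.filter fun u => T v u).card : ℝ) := by
        rw [houtA']; linarith [hout v]
      have h2 : ((A'.filter fun u => T v u).card : ℝ)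
          ≤ ((A.filter fun u => T v u).card : ℝ) + ((A' \ A).card : ℝ) := by
        exact_mod_cast hsub1
      linarith
    · have hinA' : ((A'.filter fun u => T u v).card : ℝ)
          = (A'.card : ℝ) - 1 - ((A'.filter fun u => T v u).card : ℝ) := by
        push_cast [← hpi]; ring
      have : (A'.card : ℝ) - 1 - n/4 - t ≤ ((A'.filter fun u => T u v).card : ℝ) := by
        rw [hinA', houtA']
        have : (0:ℝ) ≤ (f v : ℝ) := Nat.cast_nonneg _
        linarith
      have h2 : ((A'.filter fun u => T u v).card : ℝ)
          ≤ ((A.filter fun u => T u v).card : ℝ) + ((A' \ A).card : ℝ) := by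
        exact_mod_cast hsub2
      linarith
open scoped Classical in
lemma side_lemma_in {V : Type*} [Fintype V] [DecidableEq V]
    (T : V → V → Prop) [DecidableRel T] (hT : IsTournament T)
    (A' B' : Finset V) (hdisj : Disjoint A' B') (hunion : A' ∪ B' = Finset.univ)
    {n t E : ℝ} (hn : n = Fintype.card V) (ht : 0 < t) (hE : 0 ≤ E)
    (hin : ∀ v, n / 4 ≤ (inDeg T v : ℝ))
    (hcardB : (B'.card : ℝ) ≤ (n + 1) / 2)
    (heE : (eDir T A' B' : ℝ) ≤ E) :
    ∃ B ⊆ B', ((B' \ B).card : ℝ) ≤ 2 * E / t ∧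
      ∀ v ∈ B,
        n / 4 - t - 2 * E / t ≤ ((B.filter fun u => T u v).card : ℝ) ∧
        (B'.card : ℝ) - 1 - n / 4 - t - 2 * E / t ≤ ((B.filter fun u => T v u).card : ℝ) := by
  set f : V → ℕ := fun v => (A'.filter fun u => T u v).card with hf
  have hsplit : ∀ v, (inDeg T v) = (B'.filter fun u => T u v).card + f v := by
    intro v
    have h : (Finset.univ.filter fun u => T u v)
        = (A'.filter fun u => T u v) ∪ (B'.filter fun u => T u v) := by
      rw [← Finset.filter_union, hunion]
    rw [inDeg, h, Finset.card_union_of_disjoint (Finset.disjoint_filter_filter hdisj)]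
    simp only [hf]
    omega
  have hsumf : ∑ v ∈ B', (f v : ℝ) = (eDir T A' B' : ℝ) := by
    rw [← sum_in_eq T A' B']; push_cast; rfl
  have hsumoutB : ∑ v ∈ B', ((B'.filter fun u => T v u).card : ℝ) = (eDir T B' B' : ℝ) := by
    rw [← sum_out_eq T B' B']; push_cast; rfl
  have hsuminB : ∑ v ∈ B', ((B'.filter fun u => T u v).card : ℝ) = (eDir T B' B' : ℝ) := by
    rw [← sum_in_eq T B' B']; push_cast; rfl
  have h2e : 2 * (eDir T B' B' : ℝ) + (B'.card : ℝ) = (B'.card : ℝ) * (B'.card : ℝ) := by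
    have h : ∑ v ∈ B', (((B'.filter fun u => T v u).card : ℝ)
        + ((B'.filter fun u => T u v).card : ℝ) + 1) = ∑ _v ∈ B', ((B'.card : ℝ)) := by
      refine Finset.sum_congr rfl fun v hv => ?_
      have := pair_identity hT hv
      push_cast [← this]; ring
    rw [Finset.sum_add_distrib, Finset.sum_add_distrib, hsumoutB, hsuminB,
      Finset.sum_const, Finset.sum_const, nsmul_eq_mul, nsmul_eq_mul] at h
    linarith
  have hsumg : ∑ v ∈ B', ((inDeg T v : ℝ) - n / 4) ≤ E := by
    have h1 : ∑ v ∈ B', (inDeg T v : ℝ)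
        = (eDir T B' B' : ℝ) + (eDir T A' B' : ℝ) := by
      rw [← hsuminB, ← hsumf, ← Finset.sum_add_distrib]
      refine Finset.sum_congr rfl fun v _ => ?_
      rw [hsplit v]; push_cast; ring
    rw [Finset.sum_sub_distrib, h1, Finset.sum_const, nsmul_eq_mul]
    have hc0 : (0:ℝ) ≤ (B'.card : ℝ) := Nat.cast_nonneg _
    nlinarith [heE, h2e]
  set bad1 := B'.filter (fun v => t < (f v : ℝ)) with hbad1
  set bad2 := B'.filter (fun v => t < (inDeg T v : ℝ) - n / 4) with hbad2
  have hcb1 : ((bad1.card : ℝ)) ≤ E / t := by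
    refine card_filter_le_of_sum_le (fun v _ => by positivity) ht ?_
    rw [hsumf]; exact heE
  have hcb2 : ((bad2.card : ℝ)) ≤ E / t := by
    refine card_filter_le_of_sum_le (fun v _ => by linarith [hin v]) ht hsumg
  refine ⟨B' \ (bad1 ∪ bad2), Finset.sdiff_subset, ?_, ?_⟩
  · have hsub : B' \ (B' \ (bad1 ∪ bad2)) ⊆ bad1 ∪ bad2 := by
      intro u hu
      simp only [Finset.mem_sdiff, not_and, not_not] at hu
      exact hu.2 hu.1
    calc ((B' \ (B' \ (bad1 ∪ bad2))).card : ℝ) ≤ ((bad1 ∪ bad2).card : ℝ) := by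
          exact_mod_cast Finset.card_le_card hsub
      _ ≤ (bad1.card : ℝ) + (bad2.card : ℝ) := by exact_mod_cast Finset.card_union_le _ _
      _ ≤ 2 * E / t := by rw [mul_div_assoc]; linarith
  · intro v hv
    set B := B' \ (bad1 ∪ bad2) with hB
    have hvB' : v ∈ B' := (Finset.mem_sdiff.mp hv).1
    have hvnb : v ∉ bad1 ∪ bad2 := (Finset.mem_sdiff.mp hv).2
    have hfv : (f v : ℝ) ≤ t := by
      by_contra h
      exact hvnb (Finset.mem_union_left _ (Finset.mem_filter.mpr ⟨hvB', lt_of_not_ge h⟩))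
    have hov : (inDeg T v : ℝ) ≤ n / 4 + t := by
      by_contra h
      exact hvnb (Finset.mem_union_right _
        (Finset.mem_filter.mpr ⟨hvB', by linarith [lt_of_not_ge h]⟩))
    have hd : ((B' \ B).card : ℝ) ≤ 2 * E / t := by
      calc ((B' \ B).card : ℝ) ≤ ((bad1 ∪ bad2).card : ℝ) := by
            refine Nat.cast_le.mpr (Finset.card_le_card ?_)
            intro u hu
            simp only [hB, Finset.mem_sdiff, not_and, not_not] at hu
            exact hu.2 hu.1
        _ ≤ (bad1.card : ℝ) + (bad2.card : ℝ) := by exact_mod_cast Finset.card_union_le _ _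
        _ ≤ 2 * E / t := by rw [mul_div_assoc]; linarith
    have hinB' : ((B'.filter fun u => T u v).card : ℝ) = (inDeg T v : ℝ) - (f v : ℝ) := by
      rw [hsplit v]; push_cast; ring
    have hsub1 := filter_card_sub (Finset.sdiff_subset : B ⊆ B') (fun u => T u v)
    have hsub2 := filter_card_sub (Finset.sdiff_subset : B ⊆ B') (fun u => T v u)
    have hpi := pair_identity hT hvB'
    constructor
    · have h3 : (n/4 : ℝ) - t ≤ ((B'.filter fun u => T u v).card : ℝ) := by
        rw [hinB']; linarith [hin v]
      have h2 : ((B'.filter fun u => T u v).card : ℝ)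
          ≤ ((B.filter fun u => T u v).card : ℝ) + ((B' \ B).card : ℝ) := by
        exact_mod_cast hsub1
      linarith
    · have houtB' : ((B'.filter fun u => T v u).card : ℝ)
          = (B'.card : ℝ) - 1 - ((B'.filter fun u => T u v).card : ℝ) := by
        push_cast [← hpi]; ring
      have h3 : (B'.card : ℝ) - 1 - n/4 - t ≤ ((B'.filter fun u => T v u).card : ℝ) := by
        rw [houtB', hinB']
        have : (0:ℝ) ≤ (f v : ℝ) := Nat.cast_nonneg _
        linarith
      have h2 : ((B'.filter fun u => T v u).card : ℝ)
          ≤ ((B.filter fun u => T v u).card : ℝ) + ((B' \ B).card : ℝ) := by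
        exact_mod_cast hsub2
      linarith

/-- given a balanced partition `(A',B')` with `e⃗(A',B') = δn²/4`, one finds
`A ⊆ A'` and `B ⊆ B'` leaving out at most `12δ^{1/4}n` vertices such that `T[A]` and `T[B]`
are `10δ^{1/4}n`-almost regular. -/
theorem almost_regular_subsets {V : Type*} [Fintype V] [DecidableEq V]
    (T : V → V → Prop) [DecidableRel T] (hT : IsTournament T)
    (hdeg : MinSemidegGE T ((Fintype.card V : ℝ) / 4))
    (A' B' : Finset V) (hdisj : Disjoint A' B') (hunion : A' ∪ B' = Finset.univ)
    (hbal : |(A'.card : ℝ) - (B'.card : ℝ)| ≤ 1)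
    (δ : ℝ) (hδ0 : 0 < δ) (hδ1 : δ ≤ 1)
    (he : (eDir T A' B' : ℝ) = δ * (Fintype.card V : ℝ) ^ 2 / 4)
    (hδn : 1 ≤ δ ^ ((1 : ℝ) / 4) * (Fintype.card V : ℝ)) :
    ∃ A ⊆ A', ∃ B ⊆ B',
      ((Finset.univ \ (A ∪ B)).card : ℝ) ≤ 12 * δ ^ ((1 : ℝ) / 4) * (Fintype.card V : ℝ) ∧
      (∀ v ∈ A,
        (A.card : ℝ) / 2 - 10 * δ ^ ((1 : ℝ) / 4) * (Fintype.card V : ℝ) ≤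
          ((A.filter fun u => T v u).card : ℝ) ∧
        (A.card : ℝ) / 2 - 10 * δ ^ ((1 : ℝ) / 4) * (Fintype.card V : ℝ) ≤
          ((A.filter fun u => T u v).card : ℝ)) ∧
      (∀ v ∈ B,
        (B.card : ℝ) / 2 - 10 * δ ^ ((1 : ℝ) / 4) * (Fintype.card V : ℝ) ≤
          ((B.filter fun u => T v u).card : ℝ) ∧
        (B.card : ℝ) / 2 - 10 * δ ^ ((1 : ℝ) / 4) * (Fintype.card V : ℝ) ≤
          ((B.filter fun u => T u v).card : ℝ)) := by
  set n : ℝ := (Fintype.card V : ℝ) with hn'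
  have hn : n = (Fintype.card V : ℝ) := rfl
  set a : ℝ := δ ^ ((1 : ℝ) / 4) with ha'
  have ha0 : 0 < a := Real.rpow_pos_of_pos hδ0 _
  have ha1 : a ≤ 1 := Real.rpow_le_one hδ0.le hδ1 (by norm_num)
  have han : 1 ≤ a * n := hδn
  have hn0 : 0 < n := by nlinarith
  have ha4 : a ^ (4 : ℕ) = δ := by
    rw [ha', ← Real.rpow_natCast (δ ^ ((1:ℝ)/4)) 4, ← Real.rpow_mul hδ0.le]
    norm_num
  set t : ℝ := a ^ 2 * n with ht'
  have ht : 0 < t := by positivity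
  set E : ℝ := δ * n ^ 2 / 4 with hE'
  have hE0 : 0 ≤ E := by positivity
  have hEt : 2 * E / t = a ^ 2 * n / 2 := by
    rw [hE', ht', ← ha4]
    field_simp
    ring
  have haan : a ^ 2 * n ≤ a * n := by
    nlinarith [mul_nonneg (mul_nonneg ha0.le hn0.le) (by linarith : (0:ℝ) ≤ 1 - a)]
  have han0 : (0:ℝ) ≤ a * n := by positivity
  have hcards : (A'.card : ℝ) + (B'.card : ℝ) = n := by
    have h1 : A'.card + B'.card = Fintype.card V := by
      rw [← Finset.card_union_of_disjoint hdisj, hunion, Finset.card_univ]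
    rw [hn, ← h1]
    push_cast
    ring
  have habs := abs_le.mp hbal
  have hcardA : (A'.card : ℝ) ≤ (n + 1) / 2 := by linarith [habs.2]
  have hcardB : (B'.card : ℝ) ≤ (n + 1) / 2 := by linarith [habs.1]
  have hcardA' : (n - 1) / 2 ≤ (A'.card : ℝ) := by linarith [habs.1]
  have hcardB' : (n - 1) / 2 ≤ (B'.card : ℝ) := by linarith [habs.2]
  have houtT : ∀ v, n / 4 ≤ (outDeg T v : ℝ) := fun v => (hdeg v).1
  have hinT : ∀ v, n / 4 ≤ (inDeg T v : ℝ) := fun v => (hdeg v).2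
  obtain ⟨A, hAsub, hAcut, hAdeg⟩ :=
    side_lemma T hT A' B' hdisj hunion hn ht hE0 houtT hcardA (le_of_eq he)
  obtain ⟨B, hBsub, hBcut, hBdeg⟩ :=
    side_lemma_in T hT A' B' hdisj hunion hn ht hE0 hinT hcardB (le_of_eq he)
  refine ⟨A, hAsub, B, hBsub, ?_, ?_, ?_⟩
  · have hsub : Finset.univ \ (A ∪ B) ⊆ (A' \ A) ∪ (B' \ B) := by
      intro u hu
      have hu' := Finset.mem_sdiff.mp hu
      have huAB : u ∈ A' ∪ B' := by rw [hunion]; exact Finset.mem_univ u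
      rcases Finset.mem_union.mp huAB with h | h
      · exact Finset.mem_union_left _ (Finset.mem_sdiff.mpr
          ⟨h, fun hA => hu'.2 (Finset.mem_union_left _ hA)⟩)
      · exact Finset.mem_union_right _ (Finset.mem_sdiff.mpr
          ⟨h, fun hB => hu'.2 (Finset.mem_union_right _ hB)⟩)
    have h1 : ((Finset.univ \ (A ∪ B)).card : ℝ)
        ≤ ((A' \ A).card : ℝ) + ((B' \ B).card : ℝ) := by
      calc ((Finset.univ \ (A ∪ B)).card : ℝ) ≤ (((A' \ A) ∪ (B' \ B)).card : ℝ) := by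
            exact_mod_cast Finset.card_le_card hsub
        _ ≤ _ := by exact_mod_cast Finset.card_union_le _ _
    rw [hEt] at hAcut hBcut
    calc ((Finset.univ \ (A ∪ B)).card : ℝ) ≤ a ^ 2 * n / 2 + a ^ 2 * n / 2 := by linarith
      _ ≤ 12 * a * n := by linarith
  · intro v hv
    obtain ⟨h1, h2⟩ := hAdeg v hv
    rw [hEt] at h1 h2
    have hcA : (A.card : ℝ) ≤ (A'.card : ℝ) := by
      exact_mod_cast Finset.card_le_card hAsub
    rw [ht'] at h1 h2
    constructor
    · refine le_trans ?_ h1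
      linarith [hcA, hcardA, haan, han, han0]
    · refine le_trans ?_ h2
      linarith [hcA, hcardA', haan, han, han0]
  · intro v hv
    obtain ⟨h1, h2⟩ := hBdeg v hv
    rw [hEt] at h1 h2
    have hcB : (B.card : ℝ) ≤ (B'.card : ℝ) := by
      exact_mod_cast Finset.card_le_card hBsub
    rw [ht'] at h1 h2
    constructor
    · refine le_trans ?_ h2
      linarith [hcB, hcardB', haan, han, han0]
    · refine le_trans ?_ h1
      linarith [hcB, hcardB, haan, han, han0]
end
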